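/- arXiv:2104.01737 — 6 statements merged into one kernel-verified Lean document; each statement's English description precedes it below -/
import Mathlib

section
/- For all real numbers A ≥ B ≥ 0 and real p ≥ 1, one has (A - B)^p ≤ A^p - p·(A - B)^{p-1}·B. -/
theorem stmt_0 (A B p : ℝ) (hB : 0 ≤ B) (hAB : B ≤ A) (hp : 1 ≤ p) :
    (A - B) ^ p ≤ A ^ p - p * (A - B) ^ (p - 1) * B := by
  set x := A - B with hx
  have hx0 : 0 ≤ x := by linarith
  rcases eq_or_lt_of_le hx0 with h0 | h0
  · -- x = 0, A = B
    have hA : A = B := by linarith [hx ▸ h0]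
    rcases eq_or_lt_of_le hp with hp1 | hp1
    · simp [← h0, ← hp1, hA]
    · rw [← h0, Real.zero_rpow (by positivity), Real.zero_rpow (by linarith)]
      have : 0 ≤ A ^ p := Real.rpow_nonneg (by linarith) p
      linarith
  · -- x > 0
    have hs : (0:ℝ) ≤ B / x := div_nonneg hB h0.le
    have key := one_add_mul_self_le_rpow_one_add (s := B / x) (by linarith) hp
    have hA : A = x * (1 + B / x) := by field_simp; linarith
    have hxpos : (0:ℝ) < x := h0
    calc x ^ p ≤ x ^ p + x ^ p * (p * (B / x)) - p * x ^ (p - 1) * B := by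
          have : x ^ p * (p * (B / x)) = p * x ^ (p - 1) * B := by
            rw [Real.rpow_sub hxpos, Real.rpow_one]
            field_simp
          linarith [this]
      _ = x ^ p * (1 + p * (B / x)) - p * x ^ (p - 1) * B := by ring
      _ ≤ x ^ p * ((1 + B / x) ^ p) - p * x ^ (p - 1) * B := by
          have hxp : 0 ≤ x ^ p := Real.rpow_nonneg hx0 p
          nlinarith [key, hxp]
      _ = A ^ p - p * x ^ (p - 1) * B := by
          rw [hA, Real.mul_rpow hx0 (by linarith)]
end

section
/- Let a ∈ ℝ, p ≥ 1, R > 0, and let w ∈ C¹((0,R)) satisfy lim_{r→0⁺} r^{a+1-p}|w(r)|^p = 0 and lim_{r→R⁻} w(r) = 0. Then |(a+1-p)/p|^p · ∫₀^R r^{a-p}|w(r)|^p dr ≤ ∫₀^R r^a |w'(r)|^p dr. -/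
open MeasureTheory Set Filter
open scoped Topology ENNReal

private lemma sq_rpow_abs (x t : ℝ) : (x ^ 2) ^ t = |x| ^ (2 * t) := by
  rw [← sq_abs, ← Real.rpow_natCast |x| 2, ← Real.rpow_mul (abs_nonneg x)]
  norm_num

private lemma hardy_ftc (a p R : ℝ) (hp : 1 ≤ p) (w : ℝ → ℝ)
    (hwc : ContinuousOn w (Ioo 0 R)) (hdc : ContinuousOn (deriv w) (Ioo 0 R))
    (hder : ∀ x ∈ Ioo 0 R, HasDerivAt w (deriv w x) x)
    {δ η : ℝ} (ε : ℝ) (hδ : δ ∈ Ioo 0 R) (hη : η ∈ Ioo 0 R) (hδη : δ ≤ η) (hε : 0 < ε) :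
    |a + 1 - p| * ∫ r in δ..η, r ^ (a - p) * |w r| ^ p ≤
      δ ^ (a + 1 - p) * (w δ ^ 2 + ε ^ 2) ^ (p / 2)
        + η ^ (a + 1 - p) * (w η ^ 2 + ε ^ 2) ^ (p / 2)
        + p * ∫ r in δ..η, r ^ (a + 1 - p) * ((w r ^ 2 + ε ^ 2) ^ ((p - 1) / 2) * |deriv w r|) := by
  have hp0 : (0 : ℝ) < p := lt_of_lt_of_le one_pos hp
  have hsub : Icc δ η ⊆ Ioo 0 R := fun x hx => ⟨lt_of_lt_of_le hδ.1 hx.1, lt_of_le_of_lt hx.2 hη.2⟩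
  have hwc' : ContinuousOn w (Icc δ η) := hwc.mono hsub
  have hdc' : ContinuousOn (deriv w) (Icc δ η) := hdc.mono hsub
  set c := a + 1 - p with hc
  set V : ℝ → ℝ := fun x => w x ^ 2 + ε ^ 2 with hV
  have hVpos : ∀ x : ℝ, 0 < V x := fun x => by positivity
  set f : ℝ → ℝ := fun r => r ^ c * V r ^ (p / 2) with hf
  set f' : ℝ → ℝ := fun x =>
      c * x ^ (a - p) * V x ^ (p / 2)
      + x ^ c * (2 * w x * deriv w x * (p / 2) * V x ^ (p / 2 - 1)) with hf'
  have hxpos : ∀ x ∈ Icc δ η, (0:ℝ) < x := fun x hx => (hsub hx).1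
  -- derivative
  have hderivf : ∀ x ∈ uIcc δ η, HasDerivAt f (f' x) x := by
    intro x hx
    rw [uIcc_of_le hδη] at hx
    have hx0 : x ≠ 0 := (hxpos x hx).ne'
    have h1 : HasDerivAt (fun r : ℝ => r ^ c) (c * x ^ (c - 1)) x :=
      Real.hasDerivAt_rpow_const (Or.inl hx0)
    have h2 : HasDerivAt V (2 * w x * deriv w x) x := by
      have := ((hder x (hsub hx)).pow 2).add_const (ε ^ 2)
      simpa [hV] using this
    have h3 : HasDerivAt (fun r => V r ^ (p / 2))
        ((2 * w x * deriv w x) * (p / 2) * V x ^ (p / 2 - 1)) x :=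
      h2.rpow_const (Or.inl (hVpos x).ne')
    have h4 := h1.mul h3
    have e : f' x = c * x ^ (c - 1) * V x ^ (p / 2)
        + x ^ c * (2 * w x * deriv w x * (p / 2) * V x ^ (p / 2 - 1)) := by
      rw [hf', show a - p = c - 1 by rw [hc]; ring]
    rw [e]; exact h4
  -- continuity of pieces
  have hcontxap : ContinuousOn (fun x : ℝ => x ^ (a - p)) (Icc δ η) :=
    continuousOn_id.rpow_const (fun x hx => Or.inl (hxpos x hx).ne')
  have hcontxc : ContinuousOn (fun x : ℝ => x ^ c) (Icc δ η) :=
    continuousOn_id.rpow_const (fun x hx => Or.inl (hxpos x hx).ne')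
  have hcontV : ContinuousOn V (Icc δ η) := (hwc'.pow 2).add continuousOn_const
  have hcontVp : ContinuousOn (fun x => V x ^ (p / 2)) (Icc δ η) :=
    hcontV.rpow_const (fun x _ => Or.inl (hVpos x).ne')
  have hcontVp1 : ContinuousOn (fun x => V x ^ (p / 2 - 1)) (Icc δ η) :=
    hcontV.rpow_const (fun x _ => Or.inl (hVpos x).ne')
  have hcontVs : ContinuousOn (fun x => V x ^ ((p - 1) / 2)) (Icc δ η) :=
    hcontV.rpow_const (fun x _ => Or.inl (hVpos x).ne')
  have hcontf' : ContinuousOn f' (Icc δ η) := by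
    apply ContinuousOn.add
    · exact (continuousOn_const.mul hcontxap).mul hcontVp
    · exact hcontxc.mul
        ((((continuousOn_const.mul hwc').mul hdc').mul continuousOn_const).mul hcontVp1)
  have hintf' : IntervalIntegrable f' volume δ η := by
    apply ContinuousOn.intervalIntegrable
    rwa [uIcc_of_le hδη]
  have hFTC : ∫ x in δ..η, f' x = f η - f δ :=
    intervalIntegral.integral_eq_sub_of_hasDerivAt hderivf hintf'
  obtain ⟨σ, hσc, hσ1⟩ : ∃ σ : ℝ, σ * c = |c| ∧ |σ| ≤ 1 := by
    rcases le_total 0 c with h | h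
    · exact ⟨1, by rw [one_mul, abs_of_nonneg h], by norm_num⟩
    · exact ⟨-1, by rw [neg_one_mul, abs_of_nonpos h], by norm_num⟩
  set g1 : ℝ → ℝ := fun x => x ^ (a - p) * |w x| ^ p with hg1
  set g2 : ℝ → ℝ := fun x => x ^ c * (V x ^ ((p - 1) / 2) * |deriv w x|) with hg2
  -- pointwise inequality
  have hpt : ∀ x ∈ Icc δ η, |c| * g1 x - p * g2 x ≤ σ * f' x := by
    intro x hx
    have hx0 : (0:ℝ) < x := hxpos x hx
    have hVx : 0 < V x := hVpos x
    have hb1 : |w x| ^ p ≤ V x ^ (p / 2) := by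
      have h1 : (w x ^ 2) ^ (p / 2) ≤ V x ^ (p / 2) :=
        Real.rpow_le_rpow (sq_nonneg _) (le_add_of_nonneg_right (sq_nonneg ε)) (by positivity)
      calc |w x| ^ p = (w x ^ 2) ^ (p / 2) := by
            rw [sq_rpow_abs, show 2 * (p / 2) = p by ring]
        _ ≤ V x ^ (p / 2) := h1
    have hb2 : |w x| ≤ V x ^ ((1:ℝ) / 2) := by
      have h1 : (w x ^ 2) ^ ((1:ℝ) / 2) ≤ V x ^ ((1:ℝ) / 2) :=
        Real.rpow_le_rpow (sq_nonneg _) (le_add_of_nonneg_right (sq_nonneg ε)) (by norm_num)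
      calc |w x| = (w x ^ 2) ^ ((1:ℝ) / 2) := by
            rw [sq_rpow_abs, show 2 * ((1:ℝ) / 2) = 1 by ring, Real.rpow_one]
        _ ≤ V x ^ ((1:ℝ) / 2) := h1
    set Z : ℝ := 2 * w x * deriv w x * (p / 2) * V x ^ (p / 2 - 1) with hZdef
    have hZ : |Z| ≤ p * (V x ^ ((p - 1) / 2) * |deriv w x|) := by
      have hVt : (0:ℝ) < V x ^ (p / 2 - 1) := Real.rpow_pos_of_pos hVx _
      have habs : |Z| = p * (|w x| * (V x ^ (p / 2 - 1) * |deriv w x|)) := by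
        rw [hZdef, abs_mul, abs_mul, abs_mul, abs_of_pos hVt,
          abs_of_pos (by positivity : (0:ℝ) < p / 2), abs_mul,
          abs_of_pos (by norm_num : (0:ℝ) < 2)]
        ring
      rw [habs]
      have h2 : |w x| * (V x ^ (p / 2 - 1) * |deriv w x|)
          ≤ V x ^ ((1:ℝ)/2) * (V x ^ (p / 2 - 1) * |deriv w x|) := by
        apply mul_le_mul_of_nonneg_right hb2
        positivity
      have h3 : V x ^ ((1:ℝ)/2) * (V x ^ (p / 2 - 1) * |deriv w x|)
          = V x ^ ((p - 1) / 2) * |deriv w x| := by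
        rw [← mul_assoc, ← Real.rpow_add hVx, show (1:ℝ)/2 + (p / 2 - 1) = (p - 1) / 2 by ring]
      rw [h3] at h2
      exact mul_le_mul_of_nonneg_left h2 hp0.le
    have e1 : |c| * g1 x ≤ |c| * (x ^ (a - p) * V x ^ (p / 2)) := by
      apply mul_le_mul_of_nonneg_left _ (abs_nonneg c)
      exact mul_le_mul_of_nonneg_left hb1 (Real.rpow_nonneg hx0.le _)
    have e2 : -(p * g2 x) ≤ σ * (x ^ c * Z) := by
      have hxc : (0:ℝ) < x ^ c := Real.rpow_pos_of_pos hx0 _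
      have h1 : |σ * (x ^ c * Z)| ≤ p * g2 x := by
        rw [abs_mul, abs_mul, abs_of_pos hxc]
        calc |σ| * (x ^ c * |Z|) ≤ 1 * (x ^ c * (p * (V x ^ ((p - 1) / 2) * |deriv w x|))) := by
              apply mul_le_mul hσ1 _ (by positivity) one_pos.le
              exact mul_le_mul_of_nonneg_left hZ hxc.le
          _ = p * g2 x := by rw [hg2]; ring
      calc -(p * g2 x) ≤ -|σ * (x ^ c * Z)| := neg_le_neg h1
        _ ≤ σ * (x ^ c * Z) := neg_abs_le _
    have expand : σ * f' x = |c| * (x ^ (a - p) * V x ^ (p / 2)) + σ * (x ^ c * Z) := by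
      rw [← hσc, hf', hZdef]; ring
    rw [expand]
    linarith [e1, e2]
  -- integrability of the pieces
  have hcontg1 : ContinuousOn g1 (Icc δ η) :=
    hcontxap.mul ((hwc'.abs).rpow_const (fun x _ => Or.inr hp0.le))
  have hcontg2 : ContinuousOn g2 (Icc δ η) :=
    hcontxc.mul (hcontVs.mul hdc'.abs)
  have hintg1 : IntervalIntegrable g1 volume δ η := by
    apply ContinuousOn.intervalIntegrable; rwa [uIcc_of_le hδη]
  have hintg2 : IntervalIntegrable g2 volume δ η := by
    apply ContinuousOn.intervalIntegrable; rwa [uIcc_of_le hδη]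
  have hintL : IntervalIntegrable (fun x => |c| * g1 x - p * g2 x) volume δ η :=
    (hintg1.const_mul |c|).sub (hintg2.const_mul p)
  have hintR : IntervalIntegrable (fun x => σ * f' x) volume δ η := hintf'.const_mul σ
  have hmono := intervalIntegral.integral_mono_on hδη hintL hintR hpt
  have hL : ∫ x in δ..η, (|c| * g1 x - p * g2 x)
      = |c| * (∫ x in δ..η, g1 x) - p * ∫ x in δ..η, g2 x := by
    rw [intervalIntegral.integral_sub (hintg1.const_mul |c|) (hintg2.const_mul p),
      intervalIntegral.integral_const_mul, intervalIntegral.integral_const_mul]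
  have hR : ∫ x in δ..η, σ * f' x = σ * (f η - f δ) := by
    rw [intervalIntegral.integral_const_mul, hFTC]
  rw [hL, hR] at hmono
  have hfδ : 0 ≤ f δ := by
    have := Real.rpow_pos_of_pos hδ.1 c
    have := Real.rpow_pos_of_pos (hVpos δ) (p / 2)
    positivity
  have hfη : 0 ≤ f η := by
    have := Real.rpow_pos_of_pos hη.1 c
    have := Real.rpow_pos_of_pos (hVpos η) (p / 2)
    positivity
  have hbound : σ * (f η - f δ) ≤ f δ + f η := by
    have h1 : |σ * (f η - f δ)| ≤ 1 * |f η - f δ| :=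
      by rw [abs_mul]; exact mul_le_mul_of_nonneg_right hσ1 (abs_nonneg _)
    have h2 : |f η - f δ| ≤ |f η| + |f δ| := abs_sub _ _
    rw [abs_of_nonneg hfη, abs_of_nonneg hfδ] at h2
    have h3 := le_abs_self (σ * (f η - f δ))
    linarith
  have hfin : |c| * (∫ x in δ..η, g1 x) ≤ f δ + f η + p * ∫ x in δ..η, g2 x := by
    linarith
  exact hfin

private lemma hardy_master (a p R : ℝ) (hp : 1 ≤ p) (w : ℝ → ℝ)
    (hwc : ContinuousOn w (Ioo 0 R)) (hdc : ContinuousOn (deriv w) (Ioo 0 R))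
    (hder : ∀ x ∈ Ioo 0 R, HasDerivAt w (deriv w x) x)
    {δ η : ℝ} (hδ : δ ∈ Ioo 0 R) (hη : η ∈ Ioo 0 R) (hδη : δ ≤ η) :
    |a + 1 - p| * ∫ r in δ..η, r ^ (a - p) * |w r| ^ p ≤
      δ ^ (a + 1 - p) * |w δ| ^ p + η ^ (a + 1 - p) * |w η| ^ p
        + p * ∫ r in δ..η, r ^ (a + 1 - p) * (|w r| ^ (p - 1) * |deriv w r|) := by
  have hp0 : (0 : ℝ) < p := lt_of_lt_of_le one_pos hp
  have hsub : Icc δ η ⊆ Ioo 0 R := fun x hx => ⟨lt_of_lt_of_le hδ.1 hx.1, lt_of_le_of_lt hx.2 hη.2⟩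
  have hxpos : ∀ x ∈ Icc δ η, (0:ℝ) < x := fun x hx => (hsub hx).1
  set εs : ℕ → ℝ := fun n => 1 / (n + 1) with hεs
  have hεpos : ∀ n, 0 < εs n := fun n => by positivity
  have key := fun n : ℕ =>
    hardy_ftc a p R hp w hwc hdc hder (εs n) hδ hη hδη (hεpos n)
  -- ε_n ^ 2 → 0
  have hε2 : Tendsto (fun n : ℕ => εs n ^ 2) atTop (𝓝 0) := by
    have h1 : Tendsto εs atTop (𝓝 0) := tendsto_one_div_add_atTop_nhds_zero_nat
    simpa using h1.pow 2
  -- pointwise limit of (w x ^ 2 + ε^2) ^ t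
  have hptlim : ∀ (x : ℝ) (t : ℝ), 0 ≤ t →
      Tendsto (fun n : ℕ => (w x ^ 2 + εs n ^ 2) ^ t) atTop (𝓝 ((w x ^ 2) ^ t)) := by
    intro x t ht
    have h1 : Tendsto (fun n : ℕ => w x ^ 2 + εs n ^ 2) atTop (𝓝 (w x ^ 2)) := by
      simpa using (tendsto_const_nhds.add hε2)
    exact (Real.continuousAt_rpow_const _ t (Or.inr ht)).tendsto.comp h1
  -- boundary limits
  have hbδ : Tendsto (fun n : ℕ => δ ^ (a + 1 - p) * (w δ ^ 2 + εs n ^ 2) ^ (p / 2)) atTop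
      (𝓝 (δ ^ (a + 1 - p) * |w δ| ^ p)) := by
    have := (hptlim δ (p / 2) (by positivity)).const_mul (δ ^ (a + 1 - p))
    simpa [sq_rpow_abs, show 2 * (p / 2) = p by ring] using this
  have hbη : Tendsto (fun n : ℕ => η ^ (a + 1 - p) * (w η ^ 2 + εs n ^ 2) ^ (p / 2)) atTop
      (𝓝 (η ^ (a + 1 - p) * |w η| ^ p)) := by
    have := (hptlim η (p / 2) (by positivity)).const_mul (η ^ (a + 1 - p))
    simpa [sq_rpow_abs, show 2 * (p / 2) = p by ring] using this
  -- DCT for the integral term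
  have hDCT : Tendsto (fun n : ℕ =>
        ∫ r in δ..η, r ^ (a + 1 - p) * ((w r ^ 2 + εs n ^ 2) ^ ((p - 1) / 2) * |deriv w r|))
      atTop (𝓝 (∫ r in δ..η, r ^ (a + 1 - p) * (|w r| ^ (p - 1) * |deriv w r|))) := by
    have hfun : ∀ r : ℝ, r ^ (a + 1 - p) * (|w r| ^ (p - 1) * |deriv w r|)
        = r ^ (a + 1 - p) * ((w r ^ 2) ^ ((p - 1) / 2) * |deriv w r|) := by
      intro r
      rw [sq_rpow_abs, show 2 * ((p - 1) / 2) = p - 1 by ring]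
    simp only [hfun]
    apply intervalIntegral.tendsto_integral_filter_of_dominated_convergence
      (bound := fun r => r ^ (a + 1 - p) * ((w r ^ 2 + 1) ^ ((p - 1) / 2) * |deriv w r|))
    · -- measurability
      apply Filter.Eventually.of_forall
      intro n
      apply ContinuousOn.aestronglyMeasurable _ measurableSet_uIoc
      have hsub2 : uIoc δ η ⊆ Icc δ η := by
        rw [uIoc_of_le hδη]; exact Ioc_subset_Icc_self
      apply ContinuousOn.mono _ hsub2
      apply ContinuousOn.mul
      · exact continuousOn_id.rpow_const (fun x hx => Or.inl (hxpos x hx).ne')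
      · apply ContinuousOn.mul
        · exact (((hwc.mono hsub).pow 2).add continuousOn_const).rpow_const
            (fun x _ => Or.inl (ne_of_gt (by
              show 0 < w x ^ 2 + εs n ^ 2; have := hεpos n; positivity)))
        · exact (hdc.mono hsub).abs
    · -- bound
      apply Filter.Eventually.of_forall
      intro n
      apply Filter.Eventually.of_forall
      intro x hx
      have hx' : x ∈ Icc δ η := by
        rw [uIoc_of_le hδη] at hx; exact Ioc_subset_Icc_self hx
      have hx0 : (0:ℝ) < x := hxpos x hx'
      have hεn1 : εs n ≤ 1 := by
        rw [hεs]
        apply div_le_one_of_le₀ <;> [skip; positivity]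
        simp [le_add_of_nonneg_left]
      have h1 : (w x ^ 2 + εs n ^ 2) ^ ((p - 1) / 2) ≤ (w x ^ 2 + 1) ^ ((p - 1) / 2) := by
        apply Real.rpow_le_rpow (by positivity) _ (by linarith)
        nlinarith [hεpos n]
      rw [Real.norm_eq_abs, abs_of_nonneg (by positivity)]
      apply mul_le_mul_of_nonneg_left _ (Real.rpow_nonneg hx0.le _)
      exact mul_le_mul_of_nonneg_right h1 (abs_nonneg _)
    · -- bound integrable
      apply ContinuousOn.intervalIntegrable
      rw [uIcc_of_le hδη]
      apply ContinuousOn.mul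
      · exact continuousOn_id.rpow_const (fun x hx => Or.inl (hxpos x hx).ne')
      · apply ContinuousOn.mul
        · exact (((hwc.mono hsub).pow 2).add continuousOn_const).rpow_const
            (fun x _ => Or.inl (ne_of_gt (by show 0 < w x ^ 2 + 1; positivity)))
        · exact (hdc.mono hsub).abs
    · -- pointwise limit
      apply Filter.Eventually.of_forall
      intro x _
      exact ((hptlim x ((p - 1) / 2) (by linarith)).mul_const _).const_mul _
  -- put limits together
  have hRHS : Tendsto (fun n : ℕ =>
      δ ^ (a + 1 - p) * (w δ ^ 2 + εs n ^ 2) ^ (p / 2)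
        + η ^ (a + 1 - p) * (w η ^ 2 + εs n ^ 2) ^ (p / 2)
        + p * ∫ r in δ..η, r ^ (a + 1 - p) * ((w r ^ 2 + εs n ^ 2) ^ ((p - 1) / 2) * |deriv w r|))
      atTop (𝓝 (δ ^ (a + 1 - p) * |w δ| ^ p + η ^ (a + 1 - p) * |w η| ^ p
        + p * ∫ r in δ..η, r ^ (a + 1 - p) * (|w r| ^ (p - 1) * |deriv w r|))) :=
    (hbδ.add hbη).add (hDCT.const_mul p)
  exact le_of_tendsto_of_tendsto' tendsto_const_nhds hRHS key

private lemma hardy_holder (a p R : ℝ) (hp : 1 ≤ p) (w : ℝ → ℝ)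
    (hwc : ContinuousOn w (Ioo 0 R)) (hdc : ContinuousOn (deriv w) (Ioo 0 R))
    {δ η : ℝ} (hδ : δ ∈ Ioo 0 R) (hη : η ∈ Ioo 0 R) (hδη : δ ≤ η) :
    ∫⁻ r in Ioc δ η, ENNReal.ofReal (r ^ (a + 1 - p) * (|w r| ^ (p - 1) * |deriv w r|)) ≤
      (∫⁻ r in Ioo 0 R, ENNReal.ofReal (r ^ a * |deriv w r| ^ p)) ^ (1/p) *
      (∫⁻ r in Ioc δ η, ENNReal.ofReal (r ^ (a - p) * |w r| ^ p)) ^ (1 - 1/p) := by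
  have hp0 : (0 : ℝ) < p := lt_of_lt_of_le one_pos hp
  have hsub : Ioc δ η ⊆ Ioo 0 R := fun x hx => ⟨lt_trans hδ.1 hx.1, lt_of_le_of_lt hx.2 hη.2⟩
  rcases eq_or_lt_of_le hp with hp1 | hp1
  · -- p = 1
    subst hp1
    simp only [sub_self, Real.rpow_zero, one_mul, ENNReal.rpow_zero, mul_one, div_one,
      ENNReal.rpow_one, add_sub_cancel_right, Real.rpow_one]
    exact lintegral_mono_set hsub
  · -- p > 1
    set q : ℝ := Real.conjExponent p with hq
    have hpq : p.HolderConjugate q := Real.HolderConjugate.conjExponent hp1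
    have hq0 : 0 < q := hpq.symm.pos
    have h1q : 1 - 1/p = 1/q := by
      have := hpq.inv_add_inv_eq_one
      rw [← one_div, ← one_div] at this
      linarith
    rw [h1q]
    set φ : ℝ → ℝ≥0∞ := fun r => ENNReal.ofReal (r ^ (a/p) * |deriv w r|) with hφ
    set ψ : ℝ → ℝ≥0∞ := fun r => ENNReal.ofReal (r ^ ((a-p)/q) * |w r| ^ (p-1)) with hψ
    have hφm : AEMeasurable φ (volume.restrict (Ioc δ η)) := by
      apply ENNReal.measurable_ofReal.comp_aemeasurable
      apply ContinuousOn.aemeasurable _ measurableSet_Ioc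
      exact (continuousOn_id.rpow_const (fun x hx => Or.inl (hsub hx).1.ne')).mul
        ((hdc.mono hsub).abs)
    have hψm : AEMeasurable ψ (volume.restrict (Ioc δ η)) := by
      apply ENNReal.measurable_ofReal.comp_aemeasurable
      apply ContinuousOn.aemeasurable _ measurableSet_Ioc
      exact (continuousOn_id.rpow_const (fun x hx => Or.inl (hsub hx).1.ne')).mul
        (((hwc.mono hsub).abs).rpow_const (fun x _ => Or.inr (by linarith)))
    have hexp : a/p + (a-p)/q = a + 1 - p := by
      have hqe : q = p / (p - 1) := hpq.conjugate_eq
      rw [hqe]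
      field_simp
      ring
    have step1 : ∫⁻ r in Ioc δ η,
        ENNReal.ofReal (r ^ (a + 1 - p) * (|w r| ^ (p - 1) * |deriv w r|))
        = ∫⁻ r in Ioc δ η, (φ * ψ) r := by
      apply setLIntegral_congr_fun measurableSet_Ioc
      intro r hr
      have hr0 : (0:ℝ) < r := (hsub hr).1
      have hre : r ^ (a + 1 - p) * (|w r| ^ (p - 1) * |deriv w r|)
          = (r ^ (a/p) * |deriv w r|) * (r ^ ((a-p)/q) * |w r| ^ (p-1)) := by
        rw [show (r ^ (a/p) * |deriv w r|) * (r ^ ((a-p)/q) * |w r| ^ (p-1))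
            = (r ^ (a/p) * r ^ ((a-p)/q)) * (|w r| ^ (p - 1) * |deriv w r|) by ring,
          ← Real.rpow_add hr0, hexp]
      beta_reduce
      rw [hre, Pi.mul_apply, hφ, hψ, ← ENNReal.ofReal_mul]
      positivity
    have step2 := ENNReal.lintegral_mul_le_Lp_mul_Lq (volume.restrict (Ioc δ η)) hpq hφm hψm
    have step3 : ∫⁻ r in Ioc δ η, φ r ^ p
        ≤ ∫⁻ r in Ioo 0 R, ENNReal.ofReal (r ^ a * |deriv w r| ^ p) := by
      have heq : ∫⁻ r in Ioc δ η, φ r ^ p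
          = ∫⁻ r in Ioc δ η, ENNReal.ofReal (r ^ a * |deriv w r| ^ p) := by
        apply setLIntegral_congr_fun measurableSet_Ioc
        intro r hr
        have hr0 : (0:ℝ) < r := (hsub hr).1
        beta_reduce
        rw [hφ, ENNReal.ofReal_rpow_of_nonneg (by positivity) hp0.le,
          Real.mul_rpow (Real.rpow_nonneg hr0.le _) (abs_nonneg _),
          ← Real.rpow_mul hr0.le, div_mul_cancel₀ _ hp0.ne']
      rw [heq]
      exact lintegral_mono_set hsub
    have step4 : ∫⁻ r in Ioc δ η, ψ r ^ q
        = ∫⁻ r in Ioc δ η, ENNReal.ofReal (r ^ (a - p) * |w r| ^ p) := by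
      apply setLIntegral_congr_fun measurableSet_Ioc
      intro r hr
      have hr0 : (0:ℝ) < r := (hsub hr).1
      have hpq1 : (p - 1) * q = p := by
        have hqe : q = p / (p - 1) := hpq.conjugate_eq
        have hp1' : p - 1 ≠ 0 := by linarith
        rw [hqe]
        field_simp
      beta_reduce
      rw [hψ, ENNReal.ofReal_rpow_of_nonneg (by positivity) hq0.le,
        Real.mul_rpow (Real.rpow_nonneg hr0.le _) (Real.rpow_nonneg (abs_nonneg _) _),
        ← Real.rpow_mul hr0.le, div_mul_cancel₀ _ hq0.ne',
        ← Real.rpow_mul (abs_nonneg _), hpq1]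
    calc ∫⁻ r in Ioc δ η, ENNReal.ofReal (r ^ (a + 1 - p) * (|w r| ^ (p - 1) * |deriv w r|))
        = ∫⁻ r in Ioc δ η, (φ * ψ) r := step1
      _ ≤ (∫⁻ r in Ioc δ η, φ r ^ p) ^ (1/p) * (∫⁻ r in Ioc δ η, ψ r ^ q) ^ (1/q) := step2
      _ ≤ (∫⁻ r in Ioo 0 R, ENNReal.ofReal (r ^ a * |deriv w r| ^ p)) ^ (1/p) *
          (∫⁻ r in Ioc δ η, ENNReal.ofReal (r ^ (a - p) * |w r| ^ p)) ^ (1/q) := by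
        rw [step4]
        exact mul_le_mul_left (ENNReal.rpow_le_rpow step3 (by positivity)) _

theorem stmt_3 (a p R : ℝ) (hp : 1 ≤ p) (hR : 0 < R) (w : ℝ → ℝ)
    (hw : ContDiffOn ℝ 1 w (Ioo 0 R))
    (h0 : Tendsto (fun r : ℝ => r ^ (a + 1 - p) * |w r| ^ p) (nhdsWithin 0 (Ioi 0)) (nhds 0))
    (hRlim : Tendsto w (nhdsWithin R (Iio R)) (nhds 0)) :
    ENNReal.ofReal (|(a + 1 - p) / p| ^ p) *
        ∫⁻ r in Ioo (0:ℝ) R, ENNReal.ofReal (r ^ (a - p) * |w r| ^ p) ≤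
      ∫⁻ r in Ioo (0:ℝ) R, ENNReal.ofReal (r ^ a * |deriv w r| ^ p) := by
  have hp0 : (0 : ℝ) < p := lt_of_lt_of_le one_pos hp
  set J := ∫⁻ r in Ioo (0:ℝ) R, ENNReal.ofReal (r ^ a * |deriv w r| ^ p) with hJdef
  set I := ∫⁻ r in Ioo (0:ℝ) R, ENNReal.ofReal (r ^ (a - p) * |w r| ^ p) with hIdef
  by_cases hJtop : J = ⊤
  · rw [hJtop]; exact le_top
  by_cases hc0 : a + 1 - p = 0
  · rw [hc0]
    rw [show |(0:ℝ)/p| = 0 by simp, Real.zero_rpow hp0.ne', ENNReal.ofReal_zero, zero_mul]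
    exact zero_le
  by_cases hI0 : I = 0
  · rw [hI0, mul_zero]; exact zero_le
  -- basic facts about w
  have hwc : ContinuousOn w (Ioo 0 R) := hw.continuousOn
  have hdc : ContinuousOn (deriv w) (Ioo 0 R) :=
    hw.continuousOn_deriv_of_isOpen isOpen_Ioo le_rfl
  have hder : ∀ x ∈ Ioo 0 R, HasDerivAt w (deriv w x) x := fun x hx =>
    ((hw.differentiableOn one_ne_zero).differentiableAt (isOpen_Ioo.mem_nhds hx)).hasDerivAt
  -- the exhausting sequences
  set u : ℕ → ℝ := fun n => R / (n + 2) with hu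
  set v : ℕ → ℝ := fun n => R - R / (n + 2) with hv
  have hcast : ∀ n : ℕ, (1:ℝ) < (n:ℝ) + 2 := fun n => by
    have := Nat.cast_nonneg (α := ℝ) n; linarith
  have hu_mem : ∀ n, u n ∈ Ioo 0 R := fun n =>
    ⟨by positivity, div_lt_self hR (hcast n)⟩
  have hv_mem : ∀ n, v n ∈ Ioo 0 R := fun n =>
    ⟨by simp only [hv, sub_pos]; exact div_lt_self hR (hcast n),
     by simp only [hv, sub_lt_self_iff]; positivity⟩
  have huhalf : ∀ n, u n ≤ R / 2 := fun n => by
    apply div_le_div_of_nonneg_left hR.le two_pos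
    have := Nat.cast_nonneg (α := ℝ) n; linarith
  have huv : ∀ n, u n ≤ v n := fun n => by
    have h1 := huhalf n
    simp only [hv, le_sub_iff_add_le]
    linarith
  have hu_anti : ∀ m n : ℕ, m ≤ n → u n ≤ u m := fun m n hmn => by
    apply div_le_div_of_nonneg_left hR.le (by positivity)
    have : (m:ℝ) ≤ (n:ℝ) := Nat.cast_le.mpr hmn
    linarith
  have hv_mono : ∀ m n : ℕ, m ≤ n → v m ≤ v n := fun m n hmn => by
    simp only [hv, sub_le_sub_iff_left]
    exact hu_anti m n hmn
  have hu_tend : Tendsto u atTop (𝓝 0) := by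
    apply Tendsto.div_atTop (tendsto_const_nhds)
    exact tendsto_atTop_add_const_right atTop 2 tendsto_natCast_atTop_atTop
  have hv_tend : Tendsto v atTop (𝓝 R) := by
    have h1 : Tendsto (fun n : ℕ => R - u n) atTop (𝓝 (R - 0)) :=
      tendsto_const_nhds.sub hu_tend
    simpa [hv] using h1
  -- the approximating lintegrals
  set ge : ℝ → ℝ≥0∞ := fun r => ENNReal.ofReal (r ^ (a - p) * |w r| ^ p) with hge
  set En : ℕ → ℝ≥0∞ := fun n => ∫⁻ r in Ioc (u n) (v n), ge r with hEn
  set A : ℕ → ℝ := fun n => ∫ r in (u n)..(v n), r ^ (a - p) * |w r| ^ p with hA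
  have hIocIoo : ∀ n, Ioc (u n) (v n) ⊆ Ioo 0 R := fun n x hx =>
    ⟨lt_trans (hu_mem n).1 hx.1, lt_of_le_of_lt hx.2 (hv_mem n).2⟩
  have hIccIoo : ∀ n, Icc (u n) (v n) ⊆ Ioo 0 R := fun n x hx =>
    ⟨lt_of_lt_of_le (hu_mem n).1 hx.1, lt_of_le_of_lt hx.2 (hv_mem n).2⟩
  have hgcont : ∀ n, ContinuousOn (fun r : ℝ => r ^ (a - p) * |w r| ^ p)
      (Icc (u n) (v n)) := fun n =>
    (continuousOn_id.rpow_const (fun x hx => Or.inl (hIccIoo n hx).1.ne')).mul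
      (((hwc.mono (hIccIoo n)).abs).rpow_const (fun x _ => Or.inr hp0.le))
  have hgint : ∀ n, IntegrableOn (fun r : ℝ => r ^ (a - p) * |w r| ^ p)
      (Ioc (u n) (v n)) volume := fun n =>
    ((hgcont n).integrableOn_Icc).mono_set Ioc_subset_Icc_self
  have hgnn : ∀ n, 0 ≤ᵐ[volume.restrict (Ioc (u n) (v n))]
      (fun r : ℝ => r ^ (a - p) * |w r| ^ p) := fun n =>
    (ae_restrict_iff' measurableSet_Ioc).mpr (Filter.Eventually.of_forall fun x hx => by
      have : (0:ℝ) < x := (hIocIoo n hx).1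
      positivity)
  have hAen : ∀ n, En n = ENNReal.ofReal (A n) := by
    intro n
    rw [hEn, hA]
    simp only
    rw [intervalIntegral.integral_of_le (huv n)]
    exact (ofReal_integral_eq_lintegral_ofReal (hgint n) (hgnn n)).symm
  have hA_nonneg : ∀ n, 0 ≤ A n := fun n => by
    rw [hA]; simp only
    rw [intervalIntegral.integral_of_le (huv n)]
    exact integral_nonneg_of_ae (hgnn n)
  have hEmono : Monotone En := fun m n hmn =>
    lintegral_mono_set (Ioc_subset_Ioc (hu_anti m n hmn) (hv_mono m n hmn))
  -- En tends to I
  have hsup : (⨆ n, En n) = I := by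
    have hind : ∀ n, En n = ∫⁻ r, (Ioc (u n) (v n)).indicator ge r :=
      fun n => (lintegral_indicator measurableSet_Ioc ge).symm
    have hmeas : ∀ n, AEMeasurable (fun r => (Ioc (u n) (v n)).indicator ge r) volume := by
      intro n
      apply (aemeasurable_indicator_iff measurableSet_Ioc).mpr
      apply ENNReal.measurable_ofReal.comp_aemeasurable
      exact ((hgcont n).mono Ioc_subset_Icc_self).aemeasurable measurableSet_Ioc
    have hmono' : ∀ᵐ r : ℝ, Monotone fun n => (Ioc (u n) (v n)).indicator ge r :=
      Filter.Eventually.of_forall fun r m n hmn =>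
        Set.indicator_le_indicator_of_subset
          (Ioc_subset_Ioc (hu_anti m n hmn) (hv_mono m n hmn)) (fun _ => zero_le) r
    have hiSup : ∀ r : ℝ, (⨆ n, (Ioc (u n) (v n)).indicator ge r)
        = (Ioo 0 R).indicator ge r := by
      intro r
      rcases em (r ∈ Ioo 0 R) with hr | hr
      · rw [Set.indicator_of_mem hr]
        apply le_antisymm
        · apply iSup_le
          intro n
          rcases em (r ∈ Ioc (u n) (v n)) with h | h
          · rw [Set.indicator_of_mem h]
          · rw [Set.indicator_of_notMem h]; exact zero_le
        · obtain ⟨n, hn1, hn2⟩ :=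
            ((hu_tend.eventually_lt_const hr.1).and (hv_tend.eventually_const_lt hr.2)).exists
          exact le_iSup_of_le n (le_of_eq (Set.indicator_of_mem (show r ∈ Ioc (u n) (v n) from ⟨hn1, hn2.le⟩) ge).symm)
      · rw [Set.indicator_of_notMem hr]
        have h2 : ∀ n, r ∉ Ioc (u n) (v n) := fun n h => hr (hIocIoo n h)
        simp [Set.indicator_of_notMem, h2]
    calc (⨆ n, En n) = ⨆ n, ∫⁻ r, (Ioc (u n) (v n)).indicator ge r := by
          simp only [hind]
      _ = ∫⁻ r, ⨆ n, (Ioc (u n) (v n)).indicator ge r := (lintegral_iSup' hmeas hmono').symm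
      _ = ∫⁻ r, (Ioo 0 R).indicator ge r := by simp only [hiSup]
      _ = I := lintegral_indicator measurableSet_Ioo ge
  have hEtend : Tendsto En atTop (𝓝 I) := hsup ▸ tendsto_atTop_iSup hEmono
  -- boundary terms
  set bnd : ℕ → ℝ := fun n =>
    u n ^ (a + 1 - p) * |w (u n)| ^ p + v n ^ (a + 1 - p) * |w (v n)| ^ p with hbnd
  have hbnd0 : Tendsto bnd atTop (𝓝 0) := by
    have h1 : Tendsto (fun n => u n ^ (a + 1 - p) * |w (u n)| ^ p) atTop (𝓝 0) := by
      apply h0.comp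
      apply tendsto_nhdsWithin_of_tendsto_nhds_of_eventually_within _ hu_tend
      exact Filter.Eventually.of_forall fun n => (hu_mem n).1
    have h2 : Tendsto (fun n => v n ^ (a + 1 - p) * |w (v n)| ^ p) atTop
        (𝓝 (R ^ (a + 1 - p) * 0)) := by
      apply Tendsto.mul
      · exact (Real.continuousAt_rpow_const R (a + 1 - p) (Or.inl hR.ne')).tendsto.comp hv_tend
      · have hwv : Tendsto (fun n => w (v n)) atTop (𝓝 0) := by
          apply hRlim.comp
          apply tendsto_nhdsWithin_of_tendsto_nhds_of_eventually_within _ hv_tend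
          exact Filter.Eventually.of_forall fun n => (hv_mem n).2
        have habs : Tendsto (fun n => |w (v n)|) atTop (𝓝 0) := by
          simpa using hwv.abs
        have h3 : Tendsto (fun n => |w (v n)| ^ p) atTop (𝓝 ((0:ℝ) ^ p)) := by
          apply habs.rpow_const (Or.inr hp0.le)
        rwa [Real.zero_rpow hp0.ne'] at h3
    rw [mul_zero] at h2
    simpa [hbnd] using h1.add h2
  have hbnd_nn : ∀ n, 0 ≤ bnd n := fun n => by
    have h1 : (0:ℝ) < u n := (hu_mem n).1
    have h2 : (0:ℝ) < v n := (hv_mem n).1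
    rw [hbnd]
    have := Real.rpow_pos_of_pos h1 (a + 1 - p)
    have := Real.rpow_pos_of_pos h2 (a + 1 - p)
    positivity
  -- master inequality
  set jt : ℝ := J.toReal with hjt
  have hjt_nn : 0 ≤ jt := ENNReal.toReal_nonneg
  have hmain : ∀ n, |a + 1 - p| * A n
      ≤ bnd n + p * (jt ^ (1/p) * A n ^ (1 - 1/p)) := by
    intro n
    have h1 := hardy_master a p R hp w hwc hdc hder (hu_mem n) (hv_mem n) (huv n)
    set Bn : ℝ := ∫ r in (u n)..(v n), r ^ (a + 1 - p) * (|w r| ^ (p - 1) * |deriv w r|)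
      with hBn
    -- convert Bn and apply Hölder
    have hBcont : ContinuousOn (fun r : ℝ => r ^ (a + 1 - p) * (|w r| ^ (p - 1) * |deriv w r|))
        (Icc (u n) (v n)) :=
      (continuousOn_id.rpow_const (fun x hx => Or.inl (hIccIoo n hx).1.ne')).mul
        ((((hwc.mono (hIccIoo n)).abs).rpow_const (fun x _ => Or.inr (by linarith))).mul
          ((hdc.mono (hIccIoo n)).abs))
    have hBint : IntegrableOn (fun r : ℝ => r ^ (a + 1 - p) * (|w r| ^ (p - 1) * |deriv w r|))
        (Ioc (u n) (v n)) volume := hBcont.integrableOn_Icc.mono_set Ioc_subset_Icc_self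
    have hBnn : 0 ≤ᵐ[volume.restrict (Ioc (u n) (v n))]
        (fun r : ℝ => r ^ (a + 1 - p) * (|w r| ^ (p - 1) * |deriv w r|)) :=
      (ae_restrict_iff' measurableSet_Ioc).mpr (Filter.Eventually.of_forall fun x hx => by
        have : (0:ℝ) < x := (hIocIoo n hx).1
        positivity)
    have hBofReal : ENNReal.ofReal Bn
        = ∫⁻ r in Ioc (u n) (v n),
            ENNReal.ofReal (r ^ (a + 1 - p) * (|w r| ^ (p - 1) * |deriv w r|)) := by
      rw [hBn, intervalIntegral.integral_of_le (huv n)]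
      exact ofReal_integral_eq_lintegral_ofReal hBint hBnn
    have hHold := hardy_holder a p R hp w hwc hdc (hu_mem n) (hv_mem n) (huv n)
    have hchain : ENNReal.ofReal Bn ≤ ENNReal.ofReal (jt ^ (1/p) * A n ^ (1 - 1/p)) := by
      rw [hBofReal]
      refine hHold.trans (le_of_eq ?_)
      rw [show (∫⁻ r in Ioc (u n) (v n), ENNReal.ofReal (r ^ (a - p) * |w r| ^ p)) = En n
          from rfl, hAen n, ← hJdef]
      rw [← ENNReal.ofReal_toReal hJtop, ← hjt,
        ENNReal.ofReal_rpow_of_nonneg hjt_nn (by positivity),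
        ENNReal.ofReal_rpow_of_nonneg (hA_nonneg n) (by
          have : 1/p ≤ 1 := by
            rw [div_le_one hp0]; exact hp
          linarith),
        ← ENNReal.ofReal_mul (by positivity)]
    have hBle : Bn ≤ jt ^ (1/p) * A n ^ (1 - 1/p) := by
      have hrhs_nn : 0 ≤ jt ^ (1/p) * A n ^ (1 - 1/p) :=
        mul_nonneg (Real.rpow_nonneg hjt_nn _) (Real.rpow_nonneg (hA_nonneg n) _)
      exact (ENNReal.ofReal_le_ofReal_iff hrhs_nn).mp hchain
    have h2 : p * Bn ≤ p * (jt ^ (1/p) * A n ^ (1 - 1/p)) :=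
      mul_le_mul_of_nonneg_left hBle hp0.le
    calc |a + 1 - p| * A n ≤ bnd n + p * Bn := by rw [hbnd]; exact h1.trans_eq (by ring)
      _ ≤ bnd n + p * (jt ^ (1/p) * A n ^ (1 - 1/p)) := by linarith
  have hAmono : Monotone A := fun m n hmn => by
    have h1 := hEmono hmn
    rw [hAen m, hAen n] at h1
    have := ENNReal.toReal_mono (ENNReal.ofReal_ne_top) h1
    rwa [ENNReal.toReal_ofReal (hA_nonneg m), ENNReal.toReal_ofReal (hA_nonneg n)] at this
  have hexps : 1/p + (1 - 1/p) = 1 := by ring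
  have h1p_nn : 0 ≤ 1 - 1/p := by
    have : 1/p ≤ 1 := by rw [div_le_one hp0]; exact hp
    linarith
  -- I is finite
  have hItop : I ≠ ⊤ := by
    intro htop
    have hAunb : ∀ M : ℝ, ∃ n, M ≤ A n := by
      intro M
      by_contra hcon
      push_neg at hcon
      have hle : (⨆ n, En n) ≤ ENNReal.ofReal M := by
        apply iSup_le
        intro n
        rw [hAen n]
        exact ENNReal.ofReal_le_ofReal (hcon n).le
      rw [hsup, htop] at hle
      exact (ENNReal.ofReal_ne_top (top_le_iff.mp hle)).elim
    have hAtop : Tendsto A atTop atTop := tendsto_atTop_atTop_of_monotone hAmono hAunb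
    have hfar : Tendsto (fun n => |a + 1 - p| * A n ^ (1/p : ℝ)) atTop atTop := by
      apply Tendsto.const_mul_atTop (abs_pos.mpr hc0)
      exact (tendsto_rpow_atTop (by positivity : (0:ℝ) < 1/p)).comp hAtop
    have hev := (hfar.eventually_ge_atTop (2 + p * jt ^ (1/p))).and
      ((hAtop.eventually_ge_atTop 1).and (hbnd0.eventually_lt_const one_pos))
    obtain ⟨n, hgt, hAn1, hbnd1⟩ := hev.exists
    have hAn0 : (0:ℝ) < A n := lt_of_lt_of_le one_pos hAn1
    have hAs1 : (1:ℝ) ≤ A n ^ (1 - 1/p : ℝ) := Real.one_le_rpow hAn1 h1p_nn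
    have hsplit : A n ^ (1/p : ℝ) * A n ^ (1 - 1/p : ℝ) = A n := by
      rw [← Real.rpow_add hAn0, hexps, Real.rpow_one]
    have hkey := hmain n
    -- bnd n + p * (jt^(1/p) * A n^(1-1/p)) ≤ (1 + p*jt^(1/p)) * A n^(1-1/p)
    have h3 : bnd n + p * (jt ^ (1/p) * A n ^ (1 - 1/p))
        ≤ (1 + p * jt ^ (1/p)) * A n ^ (1 - 1/p) := by
      have hb : bnd n ≤ A n ^ (1 - 1/p : ℝ) := hbnd1.le.trans hAs1
      nlinarith [Real.rpow_nonneg hjt_nn (1/p : ℝ), hp0.le]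
    have h4 : (2 + p * jt ^ (1/p)) * A n ^ (1 - 1/p)
        ≤ (|a + 1 - p| * A n ^ (1/p : ℝ)) * A n ^ (1 - 1/p : ℝ) :=
      mul_le_mul_of_nonneg_right hgt (le_trans zero_le_one hAs1)
    rw [mul_assoc, hsplit] at h4
    have h5 : |a + 1 - p| * A n ≤ (1 + p * jt ^ (1/p)) * A n ^ (1 - 1/p) :=
      hkey.trans h3
    have h6 : (2 + p * jt ^ (1/p)) * A n ^ (1 - 1/p)
        ≤ (1 + p * jt ^ (1/p)) * A n ^ (1 - 1/p) := h4.trans h5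
    have h7 : A n ^ (1 - 1/p : ℝ) ≤ 0 := by nlinarith
    linarith
  -- pass to the limit
  set i : ℝ := I.toReal with hi
  have hipos : 0 < i := ENNReal.toReal_pos hI0 hItop
  have hAtendI : Tendsto A atTop (𝓝 i) := by
    have h2 := (ENNReal.tendsto_toReal hItop).comp hEtend
    have h3 : (fun n => (En n).toReal) = A := by
      funext n
      rw [hAen n, ENNReal.toReal_ofReal (hA_nonneg n)]
    rwa [show (ENNReal.toReal ∘ En) = fun n => (En n).toReal from rfl, h3] at h2
  have hlim : |a + 1 - p| * i ≤ 0 + p * (jt ^ (1/p) * i ^ (1 - 1/p)) := by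
    apply le_of_tendsto_of_tendsto' (hAtendI.const_mul _) _ hmain
    apply hbnd0.add
    apply Tendsto.const_mul
    exact (hAtendI.rpow_const (Or.inr h1p_nn)).const_mul _
  rw [zero_add] at hlim
  have hsplit : i ^ (1/p : ℝ) * i ^ (1 - 1/p : ℝ) = i := by
    rw [← Real.rpow_add hipos, hexps, Real.rpow_one]
  have hstep : |a + 1 - p| * i ^ (1/p : ℝ) ≤ p * jt ^ (1/p) := by
    have h3 : (0:ℝ) < i ^ (1 - 1/p : ℝ) := Real.rpow_pos_of_pos hipos _
    have h2 : (|a + 1 - p| * i ^ (1/p : ℝ)) * i ^ (1 - 1/p : ℝ)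
        ≤ (p * jt ^ (1/p)) * i ^ (1 - 1/p : ℝ) := by
      rw [mul_assoc, hsplit]
      calc |a + 1 - p| * i ≤ p * (jt ^ (1/p) * i ^ (1 - 1/p)) := hlim
        _ = (p * jt ^ (1/p)) * i ^ (1 - 1/p : ℝ) := by ring
    exact le_of_mul_le_mul_right h2 h3
  have hfin : |a + 1 - p| ^ p * i ≤ p ^ p * jt := by
    have h4 := Real.rpow_le_rpow (by positivity) hstep hp0.le
    rw [Real.mul_rpow (abs_nonneg _) (Real.rpow_nonneg hipos.le _),
      Real.mul_rpow hp0.le (Real.rpow_nonneg hjt_nn _),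
      ← Real.rpow_mul hipos.le, ← Real.rpow_mul hjt_nn,
      one_div_mul_cancel hp0.ne', Real.rpow_one, Real.rpow_one] at h4
    exact h4
  have hgoal : |(a + 1 - p) / p| ^ p * i ≤ jt := by
    rw [abs_div, abs_of_pos hp0, Real.div_rpow (abs_nonneg _) hp0.le,
      div_mul_eq_mul_div, div_le_iff₀ (Real.rpow_pos_of_pos hp0 p)]
    calc |a + 1 - p| ^ p * i ≤ p ^ p * jt := hfin
      _ = jt * p ^ p := mul_comm _ _
  calc ENNReal.ofReal (|(a + 1 - p) / p| ^ p) * I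
      = ENNReal.ofReal (|(a + 1 - p) / p| ^ p * i) := by
        rw [← ENNReal.ofReal_toReal hItop, ← hi, ← ENNReal.ofReal_mul (by positivity)]
    _ ≤ ENNReal.ofReal jt := ENNReal.ofReal_le_ofReal hgoal
    _ = J := ENNReal.ofReal_toReal hJtop
end

section
/- Let γ > 0, b < -1 with a + 1 + (b+1)γ = 0, p ≥ 1, C ≠ 0, and set w(r) = C·(r^{-γ} − 1)^{-(b+1)/p} on (0,1). Then ∫₀¹ r^{a+p}(1 − r^γ)^{b+p}|w'(r)|^p dr = (((b+1)/p)γ)^p · ∫₀¹ r^a (1 − r^γ)^b |w(r)|^p dr, and both integrals are infinite. -/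
open MeasureTheory Set Filter

private lemma div_top (γ : ℝ) (hγ : 0 < γ) :
    (∫⁻ r in Ioo (0:ℝ) 1, ENNReal.ofReal (r⁻¹ * (1 - r ^ γ)⁻¹)) = ⊤ := by
  have hbase : (∫⁻ r in Ioo (0:ℝ) 1, ENNReal.ofReal r⁻¹) = ⊤ := by
    by_contra h
    have hm : AEStronglyMeasurable (fun x : ℝ => x⁻¹) (volume.restrict (Ioo 0 1)) :=
      measurable_inv.aestronglyMeasurable
    have hnn : 0 ≤ᵐ[volume.restrict (Ioo (0:ℝ) 1)] fun x : ℝ => x⁻¹ := by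
      filter_upwards [ae_restrict_mem measurableSet_Ioo] with x hx
      exact inv_nonneg.mpr hx.1.le
    have hint : IntegrableOn (fun x : ℝ => x⁻¹) (Ioo (0:ℝ) 1) :=
      (lintegral_ofReal_ne_top_iff_integrable hm hnn).mp h
    have : IntegrableOn (fun x : ℝ => x ^ (-1:ℝ)) (Ioo (0:ℝ) 1) :=
      hint.congr_fun (fun x hx => (Real.rpow_neg_one x).symm) measurableSet_Ioo
    have := (intervalIntegral.integrableOn_Ioo_rpow_iff zero_lt_one).mp this
    linarith
  rw [eq_top_iff, ← hbase]
  refine lintegral_mono_ae ?_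
  filter_upwards [ae_restrict_mem measurableSet_Ioo] with x hx
  have hx0 := hx.1
  have ht1 : x ^ γ < 1 := Real.rpow_lt_one hx0.le hx.2 hγ
  have hu : 0 < 1 - x ^ γ := by linarith
  refine ENNReal.ofReal_le_ofReal ?_
  nth_rewrite 1 [← mul_one x⁻¹]
  have h1 : (1:ℝ) ≤ (1 - x ^ γ)⁻¹ := by
    have ht0 : 0 < x ^ γ := Real.rpow_pos_of_pos hx0 γ
    rw [le_inv_comm₀ one_pos hu, inv_one]; linarith
  exact mul_le_mul_of_nonneg_left h1 (inv_nonneg.mpr hx0.le)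

theorem stmt_5 (a b p γ C : ℝ) (hγ : 0 < γ) (hb : b < -1)
    (hab : a + 1 + (b + 1) * γ = 0) (hp : 1 ≤ p) (hC : C ≠ 0)
    (w : ℝ → ℝ) (hw : ∀ r ∈ Ioo (0:ℝ) 1, w r = C * (r ^ (-γ) - 1) ^ (-(b + 1) / p)) :
    (∫⁻ r in Ioo (0:ℝ) 1,
        ENNReal.ofReal (r ^ (a + p) * (1 - r ^ γ) ^ (b + p) * |deriv w r| ^ p)) =
      ENNReal.ofReal ((-((b + 1) / p) * γ) ^ p) *
        ∫⁻ r in Ioo (0:ℝ) 1, ENNReal.ofReal (r ^ a * (1 - r ^ γ) ^ b * |w r| ^ p) ∧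
    (∫⁻ r in Ioo (0:ℝ) 1,
        ENNReal.ofReal (r ^ (a + p) * (1 - r ^ γ) ^ (b + p) * |deriv w r| ^ p)) = ⊤ ∧
    (∫⁻ r in Ioo (0:ℝ) 1, ENNReal.ofReal (r ^ a * (1 - r ^ γ) ^ b * |w r| ^ p)) = ⊤ := by
  have hp0 : (0:ℝ) < p := lt_of_lt_of_le one_pos hp
  set β : ℝ := -(b + 1) / p with hβdef
  have hβ : 0 < β := div_pos (by linarith) hp0
  have hβp : β * p = -(b + 1) := div_mul_cancel₀ _ hp0.ne'
  have hK : (0:ℝ) < β * γ := mul_pos hβ hγ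
  have hCpos : (0:ℝ) < |C| := abs_pos.mpr hC
  have hCp : (0:ℝ) < |C| ^ p := Real.rpow_pos_of_pos hCpos p
  -- pointwise computations on Ioo 0 1
  have key : ∀ r ∈ Ioo (0:ℝ) 1,
      r ^ a * (1 - r ^ γ) ^ b * |w r| ^ p = |C| ^ p * (r⁻¹ * (1 - r ^ γ)⁻¹) ∧
      r ^ (a + p) * (1 - r ^ γ) ^ (b + p) * |deriv w r| ^ p =
        (β * γ) ^ p * (|C| ^ p * (r⁻¹ * (1 - r ^ γ)⁻¹)) := by
    intro r hr
    obtain ⟨hr0, hr1⟩ := hr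
    have ht0 : 0 < r ^ γ := Real.rpow_pos_of_pos hr0 γ
    have ht1 : r ^ γ < 1 := Real.rpow_lt_one hr0.le hr1 hγ
    have hu : 0 < 1 - r ^ γ := by linarith
    have hs : 0 < r ^ (-γ) := Real.rpow_pos_of_pos hr0 (-γ)
    have hgfact : r ^ (-γ) - 1 = r ^ (-γ) * (1 - r ^ γ) := by
      rw [mul_sub, mul_one, ← Real.rpow_add hr0]
      norm_num
    have hg0 : 0 < r ^ (-γ) - 1 := by rw [hgfact]; exact mul_pos hs hu
    constructor
    · rw [hw r ⟨hr0, hr1⟩, abs_mul, abs_of_pos (Real.rpow_pos_of_pos hg0 _),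
        Real.mul_rpow (abs_nonneg C) (Real.rpow_pos_of_pos hg0 _).le,
        ← Real.rpow_mul hg0.le, hβp, hgfact,
        Real.mul_rpow hs.le hu.le, ← Real.rpow_mul hr0.le]
      have hra : r ^ a * r ^ (-γ * -(b + 1)) = r⁻¹ := by
        rw [← Real.rpow_add hr0, ← Real.rpow_neg_one r]
        congr 1
        linear_combination hab
      have hub : (1 - r ^ γ) ^ b * (1 - r ^ γ) ^ (-(b + 1)) = (1 - r ^ γ)⁻¹ := by
        rw [← Real.rpow_add hu, ← Real.rpow_neg_one (1 - r ^ γ)]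
        congr 1
        ring
      calc r ^ a * (1 - r ^ γ) ^ b *
            (|C| ^ p * (r ^ (-γ * -(b + 1)) * (1 - r ^ γ) ^ (-(b + 1))))
          = |C| ^ p * ((r ^ a * r ^ (-γ * -(b + 1))) *
              ((1 - r ^ γ) ^ b * (1 - r ^ γ) ^ (-(b + 1)))) := by ring
        _ = |C| ^ p * (r⁻¹ * (1 - r ^ γ)⁻¹) := by rw [hra, hub]
    · have hd : HasDerivAt (fun x : ℝ => C * (x ^ (-γ) - 1) ^ β)
          (C * (-γ * r ^ (-γ - 1) * β * (r ^ (-γ) - 1) ^ (β - 1))) r :=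
        (((Real.hasDerivAt_rpow_const (Or.inl hr0.ne')).sub_const 1).rpow_const
          (Or.inl hg0.ne')).const_mul C
      have hderiv : deriv w r = C * (-γ * r ^ (-γ - 1) * β * (r ^ (-γ) - 1) ^ (β - 1)) := by
        have hev : w =ᶠ[nhds r] fun x => C * (x ^ (-γ) - 1) ^ β := by
          filter_upwards [isOpen_Ioo.mem_nhds ⟨hr0, hr1⟩] with x hx using hw x hx
        rw [hev.deriv_eq, hd.deriv]
      have hrp : (0:ℝ) < r ^ (-γ - 1) := Real.rpow_pos_of_pos hr0 _
      have hgb : (0:ℝ) < (r ^ (-γ) - 1) ^ (β - 1) := Real.rpow_pos_of_pos hg0 _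
      have habs : |deriv w r| =
          |C| * (β * (r ^ (-γ) - 1) ^ (β - 1) * (γ * r ^ (-γ - 1))) := by
        rw [hderiv, abs_mul]
        congr 1
        have heq : -γ * r ^ (-γ - 1) * β * (r ^ (-γ) - 1) ^ (β - 1) =
            -(β * (r ^ (-γ) - 1) ^ (β - 1) * (γ * r ^ (-γ - 1))) := by ring
        rw [heq, abs_neg, abs_of_pos (by positivity)]
      have hds : |deriv w r| ^ p =
          |C| ^ p * (β ^ p * (r ^ (-γ) - 1) ^ ((β - 1) * p) *
            (γ ^ p * r ^ ((-γ - 1) * p))) := by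
        rw [habs, Real.mul_rpow (abs_nonneg C) (by positivity),
          Real.mul_rpow (by positivity) (by positivity),
          Real.mul_rpow hβ.le hgb.le, Real.mul_rpow hγ.le hrp.le,
          ← Real.rpow_mul hg0.le, ← Real.rpow_mul hr0.le]
      have h1 : (β - 1) * p = -(b + 1) - p := by rw [sub_mul, hβp, one_mul]
      have hgE : (r ^ (-γ) - 1) ^ (-(b + 1) - p) =
          r ^ (-γ * (-(b + 1) - p)) * (1 - r ^ γ) ^ (-(b + 1) - p) := by
        rw [hgfact, Real.mul_rpow hs.le hu.le, ← Real.rpow_mul hr0.le]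
      have hra2 : r ^ (a + p) * (r ^ (-γ * (-(b + 1) - p)) * r ^ ((-γ - 1) * p)) = r⁻¹ := by
        rw [← Real.rpow_add hr0, ← Real.rpow_add hr0, ← Real.rpow_neg_one r]
        congr 1
        linear_combination hab
      have hub2 : (1 - r ^ γ) ^ (b + p) * (1 - r ^ γ) ^ (-(b + 1) - p) = (1 - r ^ γ)⁻¹ := by
        rw [← Real.rpow_add hu, ← Real.rpow_neg_one (1 - r ^ γ)]
        congr 1
        ring
      rw [hds, h1, hgE, Real.mul_rpow hβ.le hγ.le]
      calc r ^ (a + p) * (1 - r ^ γ) ^ (b + p) *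
            (|C| ^ p * (β ^ p * (r ^ (-γ * (-(b + 1) - p)) * (1 - r ^ γ) ^ (-(b + 1) - p)) *
              (γ ^ p * r ^ ((-γ - 1) * p))))
          = β ^ p * γ ^ p * (|C| ^ p *
              ((r ^ (a + p) * (r ^ (-γ * (-(b + 1) - p)) * r ^ ((-γ - 1) * p))) *
               ((1 - r ^ γ) ^ (b + p) * (1 - r ^ γ) ^ (-(b + 1) - p)))) := by ring
        _ = β ^ p * γ ^ p * (|C| ^ p * (r⁻¹ * (1 - r ^ γ)⁻¹)) := by rw [hra2, hub2]
  -- rewrite the two integrals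
  have hL2 : (∫⁻ r in Ioo (0:ℝ) 1, ENNReal.ofReal (r ^ a * (1 - r ^ γ) ^ b * |w r| ^ p)) = ⊤ := by
    rw [setLIntegral_congr_fun measurableSet_Ioo
      (fun r hr => by rw [(key r hr).1])]
    simp_rw [ENNReal.ofReal_mul hCp.le]
    rw [lintegral_const_mul' _ _ ENNReal.ofReal_ne_top, div_top γ hγ,
      ENNReal.mul_top (by simp [ENNReal.ofReal_eq_zero, not_le, hCp])]
  have hL1 : (∫⁻ r in Ioo (0:ℝ) 1,
      ENNReal.ofReal (r ^ (a + p) * (1 - r ^ γ) ^ (b + p) * |deriv w r| ^ p)) = ⊤ := by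
    rw [setLIntegral_congr_fun measurableSet_Ioo
      (fun r hr => by rw [(key r hr).2])]
    simp_rw [ENNReal.ofReal_mul (Real.rpow_pos_of_pos hK p).le, ENNReal.ofReal_mul hCp.le]
    rw [lintegral_const_mul' _ _ ENNReal.ofReal_ne_top,
      lintegral_const_mul' _ _ ENNReal.ofReal_ne_top, div_top γ hγ,
      ENNReal.mul_top (by simp [ENNReal.ofReal_eq_zero, not_le, hCp]),
      ENNReal.mul_top (by simp [ENNReal.ofReal_eq_zero, not_le, Real.rpow_pos_of_pos hK p])]
  refine ⟨?_, hL1, hL2⟩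
  rw [hL1, hL2]
  have h0 : -((b + 1) / p) * γ = β * γ := by rw [hβdef]; ring
  have hpos : (0:ℝ) < (-((b + 1) / p) * γ) ^ p := by
    rw [h0]; exact Real.rpow_pos_of_pos hK p
  rw [ENNReal.mul_top (ENNReal.ofReal_pos.mpr hpos).ne']
end

section
/- Let γ > 0, N ≥ 2, β > 1. The function w(x) = (1 − |x|^γ)^{(β−1)/p}·f(x/|x|) on the unit ball B_1 ⊂ ℝ^N, for any bounded measurable f not a.e. zero on S^{N−1}, satisfies ∫_{B_1} |∇w · x/|x||^p / (|x|^{N−γ+(γ−1)p}(1−|x|^γ)^{β−p}) dx = +∞. -/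
open MeasureTheory Metric Pointwise


lemma aux_dir {E : Type*} [NormedAddCommGroup E] [NormedSpace ℝ E] {a : ℝ} (ha : 0 < a)
    {x : E} (hx : x ≠ 0) : ‖a • x‖⁻¹ • (a • x) = ‖x‖⁻¹ • x := by
  have h0 : ‖x‖ ≠ 0 := norm_ne_zero_iff.mpr hx
  rw [norm_smul, Real.norm_eq_abs, abs_of_pos ha, smul_smul]
  congr 1
  field_simp

lemma aux_pow_sub {x y : ℝ} (hx : 0 ≤ x) (hxy : x ≤ y) (n : ℕ) :
    x ^ n * (y - x) ≤ y ^ (n + 1) - x ^ (n + 1) := by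
  rw [pow_succ, pow_succ]
  nlinarith [pow_le_pow_left₀ hx hxy n, hx.trans hxy, pow_nonneg hx n]

lemma aux_one_sub_rpow (γ : ℝ) (hγ : 0 < γ) {a : ℝ} (ha0 : 0 < a) (ha1 : a ≤ 1) :
    1 - a ^ γ ≤ max 1 γ * (1 - a) := by
  rcases le_total γ 1 with h | h
  · have h2 : a ^ (1:ℝ) ≤ a ^ γ := Real.rpow_le_rpow_of_exponent_ge ha0 ha1 h
    rw [Real.rpow_one] at h2
    nlinarith [le_max_left 1 γ, sub_nonneg.2 ha1]
  · have hb := one_add_mul_self_le_rpow_one_add (s := a - 1) (by linarith) h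
    have he : (1 : ℝ) + (a - 1) = a := by ring
    rw [he] at hb
    nlinarith [le_max_right 1 γ, sub_nonneg.2 ha1]

lemma aux_val {p β γ Nr r t : ℝ} (g : ℝ) (hb : 0 < β - 1) (hγ : 0 < γ) (hp : 0 < p)
    (hr : 0 < r) (ht : 0 < t) :
    |(β - 1) / p * t ^ ((β - 1) / p - 1) * -(γ * r ^ (γ - 1)) * g| ^ p /
      (r ^ (Nr - γ + (γ - 1) * p) * t ^ (β - p))
    = ((β - 1) / p * γ) ^ p * |g| ^ p * (r ^ (γ - Nr) * t⁻¹) := by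
  have hc : 0 < (β - 1) / p := div_pos hb hp
  have ht1 : (0:ℝ) < t ^ ((β - 1) / p - 1) := Real.rpow_pos_of_pos ht _
  have hr1 : (0:ℝ) < r ^ (γ - 1) := Real.rpow_pos_of_pos hr _
  have habs : |(β - 1) / p * t ^ ((β - 1) / p - 1) * -(γ * r ^ (γ - 1)) * g|
      = ((β - 1) / p * t ^ ((β - 1) / p - 1) * (γ * r ^ (γ - 1))) * |g| := by
    rw [abs_mul]
    congr 1
    rw [show (β - 1) / p * t ^ ((β - 1) / p - 1) * -(γ * r ^ (γ - 1))
        = -((β - 1) / p * t ^ ((β - 1) / p - 1) * (γ * r ^ (γ - 1))) by ring,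
      abs_neg, abs_of_pos (by positivity)]
  rw [habs, Real.mul_rpow (by positivity) (abs_nonneg g),
    Real.mul_rpow (by positivity) (by positivity),
    Real.mul_rpow hc.le ht1.le, Real.mul_rpow hγ.le hr1.le,
    ← Real.rpow_mul ht.le, ← Real.rpow_mul hr.le]
  have hce : ((β - 1) / p - 1) * p = β - 1 - p := by field_simp
  rw [hce]
  rw [Real.mul_rpow hc.le hγ.le,
    show γ - Nr = (γ - 1) * p - (Nr - γ + (γ - 1) * p) by ring, Real.rpow_sub hr,
    show (t⁻¹ : ℝ) = t ^ (β - 1 - p) / t ^ (β - p) by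
      rw [← Real.rpow_sub ht, show β - 1 - p - (β - p) = (-1:ℝ) by ring, Real.rpow_neg_one]]
  have h1 : r ^ (Nr - γ + (γ - 1) * p) ≠ 0 := (Real.rpow_pos_of_pos hr _).ne'
  have h2 : t ^ (β - p) ≠ 0 := (Real.rpow_pos_of_pos ht _).ne'
  field_simp


lemma aux_deriv {E : Type*} [NormedAddCommGroup E] [NormedSpace ℝ E]
    (p β γ : ℝ) (hγ : 0 < γ)
    (f : E → ℝ) (w : E → ℝ)
    (hw : ∀ x ∈ ball (0:E) 1, x ≠ 0 → w x = (1 - ‖x‖ ^ γ) ^ ((β - 1) / p) * f (‖x‖⁻¹ • x))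
    (θ : E) (hθ : ‖θ‖ = 1) (r : ℝ) (hr0 : 0 < r) (hr1 : r < 1) :
    deriv (fun s : ℝ => w (s • θ)) r
      = (β - 1) / p * (1 - r ^ γ) ^ ((β - 1) / p - 1) * -(γ * r ^ (γ - 1)) * f θ := by
  have hθ0 : θ ≠ 0 := by
    intro h; rw [h, norm_zero] at hθ; norm_num at hθ
  have hEq : (fun s : ℝ => w (s • θ)) =ᶠ[nhds r] fun s => (1 - s ^ γ) ^ ((β - 1) / p) * f θ := by
    filter_upwards [Ioo_mem_nhds hr0 hr1] with s hs
    have hs0 : (0:ℝ) < s := hs.1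
    have hn : ‖s • θ‖ = s := by
      rw [norm_smul, hθ, mul_one, Real.norm_eq_abs, abs_of_pos hs0]
    have hmem : s • θ ∈ ball (0:E) 1 := by rw [mem_ball_zero_iff, hn]; exact hs.2
    have hne : s • θ ≠ 0 := smul_ne_zero hs0.ne' hθ0
    rw [hw _ hmem hne, hn, inv_smul_smul₀ hs0.ne']
  rw [hEq.deriv_eq]
  have h1 : HasDerivAt (fun s : ℝ => 1 - s ^ γ) (-(γ * r ^ (γ - 1))) r := by
    simpa using (Real.hasDerivAt_rpow_const (p := γ) (Or.inl hr0.ne')).const_sub 1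
  have hpos : (0:ℝ) < 1 - r ^ γ := by
    have := Real.rpow_lt_one hr0.le hr1 hγ; linarith
  have h2 := (h1.rpow_const (p := (β - 1) / p) (Or.inl hpos.ne')).mul_const (f θ)
  rw [h2.deriv]
  ring

theorem stmt_14 (N : ℕ) (hN : 2 ≤ N) (p β γ : ℝ) (hγ : 0 < γ) (hβ : 1 < β) (hp : 1 ≤ p)
    (f : EuclideanSpace ℝ (Fin N) → ℝ) (hf : Measurable f) (M : ℝ)
    (hbd : ∀ x, |f x| ≤ M)
    (hne : 0 < volume {x : EuclideanSpace ℝ (Fin N) |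
      x ∈ ball (0 : EuclideanSpace ℝ (Fin N)) 1 ∧ x ≠ 0 ∧ f (‖x‖⁻¹ • x) ≠ 0})
    (w : EuclideanSpace ℝ (Fin N) → ℝ)
    (hw : ∀ x ∈ ball (0 : EuclideanSpace ℝ (Fin N)) 1, x ≠ 0 →
      w x = (1 - ‖x‖ ^ γ) ^ ((β - 1) / p) * f (‖x‖⁻¹ • x)) :
    (∫⁻ x in ball (0 : EuclideanSpace ℝ (Fin N)) 1,
        ENNReal.ofReal (|deriv (fun s : ℝ => w (s • (‖x‖⁻¹ • x))) ‖x‖| ^ p /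
          (‖x‖ ^ ((N : ℝ) - γ + (γ - 1) * p) * (1 - ‖x‖ ^ γ) ^ (β - p)))) = ⊤ := by
  classical
  have hp0 : (0:ℝ) < p := lt_of_lt_of_le one_pos hp
  have hFmeas : Measurable (fun x : EuclideanSpace ℝ (Fin N) => f (‖x‖⁻¹ • x)) :=
    hf.comp ((measurable_norm.inv).smul measurable_id)
  -- choose ε with positive-measure truncated cone
  obtain ⟨ε, hε0, hT⟩ : ∃ ε : ℝ, 0 < ε ∧
      0 < volume {x : EuclideanSpace ℝ (Fin N) |
        x ∈ ball (0 : EuclideanSpace ℝ (Fin N)) 1 ∧ x ≠ 0 ∧ ε ≤ |f (‖x‖⁻¹ • x)|} := by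
    by_contra h
    push_neg at h
    have hnull : ∀ n : ℕ, volume {x : EuclideanSpace ℝ (Fin N) |
        x ∈ ball (0 : EuclideanSpace ℝ (Fin N)) 1 ∧ x ≠ 0 ∧
          1 / ((n:ℝ) + 1) ≤ |f (‖x‖⁻¹ • x)|} = 0 := by
      intro n
      exact le_antisymm (h (1 / ((n:ℝ) + 1)) (by positivity)) zero_le
    have hsub : {x : EuclideanSpace ℝ (Fin N) |
        x ∈ ball (0 : EuclideanSpace ℝ (Fin N)) 1 ∧ x ≠ 0 ∧ f (‖x‖⁻¹ • x) ≠ 0} ⊆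
        ⋃ n : ℕ, {x : EuclideanSpace ℝ (Fin N) |
          x ∈ ball (0 : EuclideanSpace ℝ (Fin N)) 1 ∧ x ≠ 0 ∧
            1 / ((n:ℝ) + 1) ≤ |f (‖x‖⁻¹ • x)|} := by
      rintro x ⟨hx1, hx2, hx3⟩
      obtain ⟨n, hn⟩ := exists_nat_one_div_lt (abs_pos.mpr hx3)
      exact Set.mem_iUnion.2 ⟨n, hx1, hx2, hn.le⟩
    exact hne.ne' (le_antisymm ((measure_mono hsub).trans_eq (measure_iUnion_null hnull))
      zero_le)
  set T := {x : EuclideanSpace ℝ (Fin N) |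
      x ∈ ball (0 : EuclideanSpace ℝ (Fin N)) 1 ∧ x ≠ 0 ∧ ε ≤ |f (‖x‖⁻¹ • x)|} with hTdef
  have hTmeas : MeasurableSet T := by
    refine MeasurableSet.inter measurableSet_ball (MeasurableSet.inter ?_ ?_)
    · exact (measurableSet_singleton (0 : EuclideanSpace ℝ (Fin N))).compl
    · exact measurableSet_le measurable_const hFmeas.abs
  have hTfin : volume T ≠ ⊤ :=
    ((measure_mono (fun x hx => hx.1)).trans_lt measure_ball_lt_top).ne
  -- scaling property
  have hscale : ∀ c : ℝ, 0 < c → c ≤ 1 →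
      volume (T ∩ ball (0 : EuclideanSpace ℝ (Fin N)) c)
        = ENNReal.ofReal (c ^ N) * volume T := by
    intro c hc0 hc1
    have hset : c • T = T ∩ ball (0 : EuclideanSpace ℝ (Fin N)) c := by
      ext x
      constructor
      · rintro ⟨y, ⟨hy1, hy2, hy3⟩, rfl⟩
        have hyn : ‖y‖ < 1 := mem_ball_zero_iff.mp hy1
        have hn : ‖c • y‖ = c * ‖y‖ := by
          rw [norm_smul, Real.norm_eq_abs, abs_of_pos hc0]
        have hy0 : 0 ≤ ‖y‖ := norm_nonneg y
        refine ⟨⟨?_, smul_ne_zero hc0.ne' hy2, ?_⟩, ?_⟩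
        · rw [mem_ball_zero_iff, hn]; nlinarith
        · rw [aux_dir hc0 hy2]; exact hy3
        · rw [mem_ball_zero_iff, hn]
          nlinarith
      · rintro ⟨⟨hx1, hx2, hx3⟩, hxb⟩
        refine ⟨c⁻¹ • x, ⟨?_, smul_ne_zero (inv_ne_zero hc0.ne') hx2, ?_⟩, ?_⟩
        · rw [mem_ball_zero_iff, norm_smul, Real.norm_eq_abs, abs_of_pos (inv_pos.2 hc0)]
          have hxc : ‖x‖ < c := mem_ball_zero_iff.mp hxb
          rw [inv_mul_lt_iff₀ hc0, mul_one]
          exact hxc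
        · rw [aux_dir (inv_pos.2 hc0) hx2]; exact hx3
        · exact smul_inv_smul₀ hc0.ne' x
    calc volume (T ∩ ball (0 : EuclideanSpace ℝ (Fin N)) c) = volume (c • T) := by rw [hset]
      _ = ENNReal.ofReal |c ^ Module.finrank ℝ (EuclideanSpace ℝ (Fin N))| * volume T :=
          Measure.addHaar_smul volume c T
      _ = ENNReal.ofReal (c ^ N) * volume T := by
          rw [finrank_euclideanSpace_fin, abs_of_pos (pow_pos hc0 N)]
  -- annuli
  set a : ℕ → ℝ := fun k => 1 - (2:ℝ)⁻¹ ^ (k + 1) with hadef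
  have ha_half : ∀ k, 1 / 2 ≤ a k := by
    intro k
    have h1 : (2:ℝ)⁻¹ ^ (k + 1) ≤ (2:ℝ)⁻¹ ^ 1 :=
      pow_le_pow_of_le_one (by norm_num) (by norm_num) (by omega)
    simp only [pow_one] at h1
    simp only [hadef]
    linarith
  have ha_lt : ∀ k, a k < 1 := by
    intro k
    have := pow_pos (show (0:ℝ) < 2⁻¹ by norm_num) (k + 1)
    simp only [hadef]
    linarith
  have ha_mono : Monotone a := by
    intro i j hij
    have h1 : (2:ℝ)⁻¹ ^ (j + 1) ≤ (2:ℝ)⁻¹ ^ (i + 1) :=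
      pow_le_pow_of_le_one (by norm_num) (by norm_num) (by omega)
    simp only [hadef]
    linarith
  set A : ℕ → Set (EuclideanSpace ℝ (Fin N)) :=
    fun k => ball (0 : EuclideanSpace ℝ (Fin N)) (a (k + 1)) \
      ball (0 : EuclideanSpace ℝ (Fin N)) (a k) with hAdef
  have hAmeas : ∀ k, MeasurableSet (A k) := fun k =>
    measurableSet_ball.diff measurableSet_ball
  have hAdisj : Pairwise (Function.onFun Disjoint A) := by
    have key : ∀ i j : ℕ, i < j → Disjoint (A i) (A j) := by
      intro i j hij
      rw [Set.disjoint_left]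
      rintro x ⟨hxi, -⟩ ⟨-, hxj⟩
      exact hxj (ball_subset_ball (ha_mono (by omega)) hxi)
    intro i j hij
    rcases lt_or_gt_of_ne hij with h | h
    · exact key i j h
    · exact (key j i h).symm
  have hvolA : ∀ k, volume (T ∩ A k)
      = ENNReal.ofReal (a (k + 1) ^ N - a k ^ N) * volume T := by
    intro k
    have hseteq : T ∩ A k = (T ∩ ball (0 : EuclideanSpace ℝ (Fin N)) (a (k + 1))) \
        (T ∩ ball (0 : EuclideanSpace ℝ (Fin N)) (a k)) := by
      ext x
      simp only [hAdef, Set.mem_inter_iff, Set.mem_diff]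
      tauto
    have hsub : (T ∩ ball (0 : EuclideanSpace ℝ (Fin N)) (a k)) ⊆
        (T ∩ ball (0 : EuclideanSpace ℝ (Fin N)) (a (k + 1))) :=
      Set.inter_subset_inter_right _ (ball_subset_ball (ha_mono (by omega)))
    have hfin : volume (T ∩ ball (0 : EuclideanSpace ℝ (Fin N)) (a k)) ≠ ⊤ :=
      ((measure_mono Set.inter_subset_left).trans_lt (lt_top_iff_ne_top.2 hTfin)).ne
    have h0k : 0 < a k := lt_of_lt_of_le (by norm_num) (ha_half k)
    have h0k1 : 0 < a (k + 1) := lt_of_lt_of_le (by norm_num) (ha_half (k + 1))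
    rw [hseteq, measure_diff hsub ((hTmeas.inter measurableSet_ball).nullMeasurableSet) hfin,
      hscale _ h0k (ha_lt k).le, hscale _ h0k1 (ha_lt (k + 1)).le,
      ← ENNReal.sub_mul (fun _ _ => hTfin),
      ← ENNReal.ofReal_sub _ (pow_nonneg h0k.le N)]
    -- constants
  set C0 : ℝ := ((β - 1) / p * γ) ^ p with hC0def
  have hC0 : 0 < C0 := Real.rpow_pos_of_pos (mul_pos (div_pos (by linarith) hp0) hγ) p
  set m : ℝ := min 1 ((2:ℝ)⁻¹ ^ (γ - (N:ℝ))) with hmdef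
  have hm0 : 0 < m := lt_min one_pos (Real.rpow_pos_of_pos (by norm_num) _)
  have hm : ∀ r : ℝ, 1 / 2 ≤ r → r ≤ 1 → m ≤ r ^ (γ - (N:ℝ)) := by
    intro r h1 h2
    have hr0 : (0:ℝ) < r := by linarith
    rcases le_or_gt 0 (γ - (N:ℝ)) with he | he
    · exact (min_le_right _ _).trans (Real.rpow_le_rpow (by norm_num) (by linarith) he)
    · refine (min_le_left _ _).trans ?_
      have h3 := Real.rpow_le_rpow_of_exponent_ge (y := 0) (z := γ - (N:ℝ)) hr0 h2 he.le
      simpa using h3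
  set δ0 : ℝ := C0 * ε ^ p * (m * (max 1 γ)⁻¹) * ((2:ℝ)⁻¹ ^ (N - 1) * 2⁻¹) with hδ0def
  have hmaxpos : (0:ℝ) < max 1 γ := lt_of_lt_of_le one_pos (le_max_left 1 γ)
  have hδ0pos : 0 < δ0 := by
    apply mul_pos (mul_pos (mul_pos hC0 (Real.rpow_pos_of_pos hε0 p))
      (mul_pos hm0 (inv_pos.2 hmaxpos)))
    positivity
  -- per-annulus lower bound
  have hmain : ∀ k : ℕ, ENNReal.ofReal δ0 * volume T ≤
      ∫⁻ x in A k, ENNReal.ofReal (|deriv (fun s : ℝ => w (s • (‖x‖⁻¹ • x))) ‖x‖| ^ p /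
          (‖x‖ ^ ((N : ℝ) - γ + (γ - 1) * p) * (1 - ‖x‖ ^ γ) ^ (β - p))) := by
    intro k
    have h0k : 0 < a k := lt_of_lt_of_le (by norm_num) (ha_half k)
    set L : ℝ := C0 * ε ^ p * (m * (max 1 γ * (2:ℝ)⁻¹ ^ (k + 1))⁻¹) with hLdef
    have hL0 : 0 ≤ L := by
      have : (0:ℝ) < max 1 γ * (2:ℝ)⁻¹ ^ (k + 1) := by positivity
      have h2 := mul_pos hm0 (inv_pos.2 this)
      nlinarith [mul_pos hC0 (Real.rpow_pos_of_pos hε0 p)]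
    have hpt : ∀ x ∈ T ∩ A k, ENNReal.ofReal L ≤ ENNReal.ofReal (|deriv (fun s : ℝ => w (s • (‖x‖⁻¹ • x))) ‖x‖| ^ p /
          (‖x‖ ^ ((N : ℝ) - γ + (γ - 1) * p) * (1 - ‖x‖ ^ γ) ^ (β - p))) := by
      rintro x ⟨⟨hx1, hx2, hx3⟩, hxA⟩
      have hr0 : (0:ℝ) < ‖x‖ := norm_pos_iff.mpr hx2
      have hr1 : ‖x‖ < 1 := mem_ball_zero_iff.mp hx1
      have hrak : a k ≤ ‖x‖ := by
        have h := hxA.2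
        simp only [mem_ball_zero_iff, not_lt] at h
        exact h
      have hθ : ‖(‖x‖⁻¹ • x : EuclideanSpace ℝ (Fin N))‖ = 1 := norm_smul_inv_norm hx2
      have htpos : (0:ℝ) < 1 - ‖x‖ ^ γ := by
        have := Real.rpow_lt_one hr0.le hr1 hγ; linarith
      rw [aux_deriv p β γ hγ f w hw _ hθ _ hr0 hr1,
        aux_val (f (‖x‖⁻¹ • x)) (by linarith) hγ hp0 hr0 htpos]
      apply ENNReal.ofReal_le_ofReal
      have hfε : ε ^ p ≤ |f (‖x‖⁻¹ • x)| ^ p := Real.rpow_le_rpow hε0.le hx3 hp0.le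
      have hrm : m ≤ ‖x‖ ^ (γ - (N:ℝ)) := hm _ (le_trans (ha_half k) hrak) hr1.le
      have htK : 1 - ‖x‖ ^ γ ≤ max 1 γ * (2:ℝ)⁻¹ ^ (k + 1) := by
        have h1 : a k ^ γ ≤ ‖x‖ ^ γ := Real.rpow_le_rpow h0k.le hrak hγ.le
        have h2 := aux_one_sub_rpow γ hγ h0k (ha_lt k).le
        have h3 : 1 - a k = (2:ℝ)⁻¹ ^ (k + 1) := by simp only [hadef]; ring
        rw [h3] at h2
        linarith
      have hinv : (max 1 γ * (2:ℝ)⁻¹ ^ (k + 1))⁻¹ ≤ (1 - ‖x‖ ^ γ)⁻¹ :=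
        inv_anti₀ htpos htK
      have h4 : m * (max 1 γ * (2:ℝ)⁻¹ ^ (k + 1))⁻¹ ≤
          ‖x‖ ^ (γ - (N:ℝ)) * (1 - ‖x‖ ^ γ)⁻¹ :=
        mul_le_mul hrm hinv (by positivity) (Real.rpow_pos_of_pos hr0 _).le
      have h5 : C0 * ε ^ p ≤ C0 * |f (‖x‖⁻¹ • x)| ^ p :=
        mul_le_mul_of_nonneg_left hfε hC0.le
      calc L ≤ C0 * |f (‖x‖⁻¹ • x)| ^ p * (‖x‖ ^ (γ - (N:ℝ)) * (1 - ‖x‖ ^ γ)⁻¹) := by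
            refine mul_le_mul h5 h4 ?_ ?_
            · have hK : (0:ℝ) < max 1 γ * (2:ℝ)⁻¹ ^ (k + 1) := by positivity
              positivity
            · exact mul_nonneg hC0.le (Real.rpow_nonneg (abs_nonneg _) p)
        _ = _ := rfl
    have hdiffk : (2:ℝ)⁻¹ ^ (N - 1) * (2:ℝ)⁻¹ ^ (k + 2) ≤ a (k + 1) ^ N - a k ^ N := by
      have h1 : a k ^ (N - 1) * (a (k + 1) - a k) ≤ a (k + 1) ^ (N - 1 + 1) - a k ^ (N - 1 + 1) :=
        aux_pow_sub h0k.le (ha_mono (by omega)) (N - 1)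
      have hN1 : N - 1 + 1 = N := by omega
      rw [hN1] at h1
      have h2 : a (k + 1) - a k = (2:ℝ)⁻¹ ^ (k + 2) := by simp only [hadef]; ring
      have h3 : (2:ℝ)⁻¹ ^ (N - 1) ≤ a k ^ (N - 1) :=
        pow_le_pow_left₀ (by norm_num) (by linarith [ha_half k]) _
      rw [h2] at h1
      have h4 : (2:ℝ)⁻¹ ^ (N - 1) * (2:ℝ)⁻¹ ^ (k + 2) ≤ a k ^ (N - 1) * (2:ℝ)⁻¹ ^ (k + 2) :=
        mul_le_mul_of_nonneg_right h3 (by positivity)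
      linarith
    have hδL : δ0 = L * ((2:ℝ)⁻¹ ^ (N - 1) * (2:ℝ)⁻¹ ^ (k + 2)) := by
      simp only [hδ0def, hLdef]
      have hq : (2:ℝ)⁻¹ ^ (k + 1) ≠ 0 := by positivity
      have hK : max 1 γ ≠ 0 := hmaxpos.ne'
      rw [pow_succ ((2:ℝ)⁻¹) (k + 1)]
      field_simp
    calc ENNReal.ofReal δ0 * volume T
        ≤ ENNReal.ofReal (L * (a (k + 1) ^ N - a k ^ N)) * volume T := by
          apply mul_le_mul_left
          apply ENNReal.ofReal_le_ofReal
          rw [hδL]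
          exact mul_le_mul_of_nonneg_left hdiffk hL0
      _ = ENNReal.ofReal L * (ENNReal.ofReal (a (k + 1) ^ N - a k ^ N) * volume T) := by
          rw [ENNReal.ofReal_mul hL0, mul_assoc]
      _ = ENNReal.ofReal L * volume (T ∩ A k) := by rw [hvolA k]
      _ = ∫⁻ _ in T ∩ A k, ENNReal.ofReal L ∂volume := (setLIntegral_const _ _).symm
      _ ≤ ∫⁻ x in T ∩ A k, ENNReal.ofReal (|deriv (fun s : ℝ => w (s • (‖x‖⁻¹ • x))) ‖x‖| ^ p /
          (‖x‖ ^ ((N : ℝ) - γ + (γ - 1) * p) * (1 - ‖x‖ ^ γ) ^ (β - p))) := setLIntegral_mono' (hTmeas.inter (hAmeas k)) hpt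
      _ ≤ ∫⁻ x in A k, ENNReal.ofReal (|deriv (fun s : ℝ => w (s • (‖x‖⁻¹ • x))) ‖x‖| ^ p /
          (‖x‖ ^ ((N : ℝ) - γ + (γ - 1) * p) * (1 - ‖x‖ ^ γ) ^ (β - p))) := lintegral_mono_set Set.inter_subset_right
  have hδne : ENNReal.ofReal δ0 * volume T ≠ 0 :=
    mul_ne_zero (ENNReal.ofReal_pos.mpr hδ0pos).ne' hT.ne'
  rw [← top_le_iff]
  calc (⊤ : ENNReal) = ∑' _ : ℕ, (ENNReal.ofReal δ0 * volume T) :=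
        (ENNReal.tsum_const_eq_top_of_ne_zero hδne).symm
    _ ≤ ∑' k : ℕ, ∫⁻ x in A k, ENNReal.ofReal (|deriv (fun s : ℝ => w (s • (‖x‖⁻¹ • x))) ‖x‖| ^ p /
          (‖x‖ ^ ((N : ℝ) - γ + (γ - 1) * p) * (1 - ‖x‖ ^ γ) ^ (β - p))) := ENNReal.tsum_le_tsum hmain
    _ = ∫⁻ x in ⋃ k, A k, ENNReal.ofReal (|deriv (fun s : ℝ => w (s • (‖x‖⁻¹ • x))) ‖x‖| ^ p /
          (‖x‖ ^ ((N : ℝ) - γ + (γ - 1) * p) * (1 - ‖x‖ ^ γ) ^ (β - p))) := (lintegral_iUnion hAmeas hAdisj _).symm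
    _ ≤ ∫⁻ x in ball (0 : EuclideanSpace ℝ (Fin N)) 1, ENNReal.ofReal (|deriv (fun s : ℝ => w (s • (‖x‖⁻¹ • x))) ‖x‖| ^ p /
          (‖x‖ ^ ((N : ℝ) - γ + (γ - 1) * p) * (1 - ‖x‖ ^ γ) ^ (β - p))) :=
        lintegral_mono_set (Set.iUnion_subset fun k =>
          Set.diff_subset.trans (ball_subset_ball (ha_lt (k + 1)).le))
end

section
/- For γ > 0, A ∈ ℝ, and k ∈ ℕ with k ≥ 1, the function F(x) = (1 − |x|^γ)^A on B_1 ∖ {0} ⊂ ℝ^N satisfies: its k-th iterated gradient/Laplacian ∇^k F (equal to Δ^m F if k = 2m, and ∇Δ^m F if k = 2m+1) can be written as Σ_{j=1}^k C_{k,j}·|x|^{jγ−k}(1−|x|^γ)^{A−j} (times x/|x| when k is odd), where the leading coefficient is C_{k,k} = (−γ)^k·∏_{ℓ=1}^k (A − ℓ + 1). -/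
open Metric

/-- The Laplacian of a function on Euclidean space, as the trace of the second derivative. -/
noncomputable def eLaplacian (N : ℕ) (u : EuclideanSpace ℝ (Fin N) → ℝ)
    (x : EuclideanSpace ℝ (Fin N)) : ℝ :=
  ∑ i : Fin N, iteratedFDeriv ℝ 2 u x ![EuclideanSpace.single i 1, EuclideanSpace.single i 1]

/-- Iterated Laplacian `Δ^m`. -/
noncomputable def iterLaplacian (N : ℕ) : ℕ → (EuclideanSpace ℝ (Fin N) → ℝ) →
    (EuclideanSpace ℝ (Fin N) → ℝ)
  | 0, u => u
  | m + 1, u => eLaplacian N (iterLaplacian N m u)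

open Real Filter

variable {E : Type*} [NormedAddCommGroup E] [InnerProductSpace ℝ E]

lemma hasFDerivAt_norm' {x : E} (hx : x ≠ 0) :
    HasFDerivAt (fun y : E => ‖y‖) (‖x‖⁻¹ • innerSL ℝ x) x := by
  have h1 : HasFDerivAt (fun y : E => ‖y‖ ^ 2) (2 • innerSL ℝ x) x := by
    simpa using (hasFDerivAt_id x).norm_sq
  have hx2 : (0:ℝ) < ‖x‖ := norm_pos_iff.2 hx
  have h2 : HasDerivAt Real.sqrt (1 / (2 * Real.sqrt (‖x‖ ^ 2))) (‖x‖ ^ 2) :=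
    hasDerivAt_sqrt (by positivity)
  have h3 := h2.comp_hasFDerivAt x h1
  have he : (fun y : E => ‖y‖) = Real.sqrt ∘ (fun y : E => ‖y‖ ^ 2) := by
    ext y; simp [Function.comp, Real.sqrt_sq (norm_nonneg _)]
  rw [he]
  refine h3.congr_fderiv (Eq.symm ?_)
  rw [Real.sqrt_sq (norm_nonneg _)]
  ext v
  simp only [ContinuousLinearMap.smul_apply, smul_eq_mul, ContinuousLinearMap.coe_smul',
    Pi.smul_apply, nsmul_eq_mul, Nat.cast_ofNat]
  field_simp

lemma radial_hasFDerivAt {g : ℝ → ℝ} {g' : ℝ} {x : E} (hx : x ≠ 0)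
    (hg : HasDerivAt g g' ‖x‖) :
    HasFDerivAt (fun y : E => g ‖y‖) ((g' * ‖x‖⁻¹) • innerSL ℝ x) x := by
  have h := hg.comp_hasFDerivAt x (hasFDerivAt_norm' hx)
  rw [show (g' * ‖x‖⁻¹) • innerSL ℝ x = g' • ‖x‖⁻¹ • innerSL ℝ x by rw [smul_smul]]
  exact h

lemma radial_hasGradientAt [CompleteSpace E] {g : ℝ → ℝ} {g' : ℝ} {x : E} (hx : x ≠ 0)
    (hg : HasDerivAt g g' ‖x‖) :
    HasGradientAt (fun y : E => g ‖y‖) (g' • (‖x‖⁻¹ • x)) x := by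
  rw [hasGradientAt_iff_hasFDerivAt]
  refine (radial_hasFDerivAt hx hg).congr_fderiv (Eq.symm ?_)
  ext v
  simp only [InnerProductSpace.toDual_apply_apply, inner_smul_left, ContinuousLinearMap.smul_apply,
    innerSL_apply_apply, smul_eq_mul, RCLike.conj_to_real, conj_trivial]
  ring

noncomputable def cstep (γ A : ℝ) (k : ℕ) (c : ℕ → ℝ) : ℕ → ℝ :=
  fun j => ((j : ℝ) * γ - k) * c j - γ * (A - j + 1) * (if j = 0 then 0 else c (j - 1))

noncomputable def cS (γ A : ℝ) (k : ℕ) (c : ℕ → ℝ) (r : ℝ) : ℝ :=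
  ∑ j ∈ Finset.range (k + 1), c j * r ^ ((j : ℝ) * γ - k) * (1 - r ^ γ) ^ (A - (j : ℝ))

lemma key_alg {γ r : ℝ} (hr0 : 0 < r) (cj q a K : ℝ) :
    cj * ((a - K) * r ^ (a - K - 1) * (1 - r ^ γ) ^ q +
        r ^ (a - K) * (-(γ * r ^ (γ - 1)) * q * (1 - r ^ γ) ^ (q - 1))) =
      ((a - K) * cj) * r ^ (a - (K + 1)) * (1 - r ^ γ) ^ q -
        (γ * q * cj) * r ^ (a + γ - (K + 1)) * (1 - r ^ γ) ^ (q - 1) := by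
  have h1 : a - K - 1 = a - (K + 1) := by ring
  have h2 : r ^ (a - K) * r ^ (γ - 1) = r ^ (a + γ - (K + 1)) := by
    rw [← Real.rpow_add hr0]; ring_nf
  rw [h1, show r ^ (a + γ - (K + 1)) = r ^ (a - K) * r ^ (γ - 1) from h2.symm]
  ring

lemma hasDerivAt_cS {γ A : ℝ} (hγ : 0 < γ) (k : ℕ) (c : ℕ → ℝ) (hc : c (k + 1) = 0)
    {r : ℝ} (hr : r ∈ Set.Ioo (0:ℝ) 1) :
    HasDerivAt (cS γ A k c) (cS γ A (k + 1) (cstep γ A k c) r) r := by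
  obtain ⟨hr0, hr1⟩ := hr
  have hrγ : (0:ℝ) < 1 - r ^ γ := by
    have : r ^ γ < 1 := Real.rpow_lt_one hr0.le hr1 hγ
    linarith
  -- derivative of each term
  have hterm : ∀ j ∈ Finset.range (k + 1),
      HasDerivAt (fun r => c j * r ^ ((j : ℝ) * γ - k) * (1 - r ^ γ) ^ (A - (j : ℝ)))
        (c j * (((j : ℝ) * γ - k) * r ^ ((j : ℝ) * γ - k - 1) * (1 - r ^ γ) ^ (A - (j : ℝ)) +
          r ^ ((j : ℝ) * γ - k) *
            (-(γ * r ^ (γ - 1)) * (A - (j : ℝ)) * (1 - r ^ γ) ^ (A - (j : ℝ) - 1)))) r := by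
    intro j _
    have h1 : HasDerivAt (fun r : ℝ => r ^ ((j : ℝ) * γ - k))
        (((j : ℝ) * γ - k) * r ^ ((j : ℝ) * γ - k - 1)) r :=
      Real.hasDerivAt_rpow_const (Or.inl hr0.ne')
    have h2 : HasDerivAt (fun r : ℝ => 1 - r ^ γ) (-(γ * r ^ (γ - 1))) r := by
      simpa using ((Real.hasDerivAt_rpow_const (p := γ) (Or.inl hr0.ne')).const_sub 1)
    have h3 : HasDerivAt (fun r : ℝ => (1 - r ^ γ) ^ (A - (j : ℝ)))
        (-(γ * r ^ (γ - 1)) * (A - (j : ℝ)) * (1 - r ^ γ) ^ (A - (j : ℝ) - 1)) r :=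
      h2.rpow_const (Or.inl hrγ.ne')
    have := ((h1.const_mul (c j)).mul h3)
    refine this.congr_deriv (Eq.symm ?_)
    ring
  have hsum := HasDerivAt.fun_sum hterm
  refine hsum.congr_deriv (Eq.symm ?_)
  -- now the algebraic identity
  unfold cS cstep
  rw [show k + 1 + 1 = k + 2 from rfl]
  have expand : ∀ j ∈ Finset.range (k + 2),
      (((j : ℝ) * γ - (k:ℝ)) * c j - γ * (A - j + 1) * (if j = 0 then 0 else c (j - 1))) *
          r ^ ((j : ℝ) * γ - ((k:ℕ)+1:ℕ)) * (1 - r ^ γ) ^ (A - (j : ℝ)) =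
        (((j : ℝ) * γ - (k:ℝ)) * c j) * r ^ ((j : ℝ) * γ - ((k:ℝ)+1)) * (1 - r ^ γ) ^ (A - (j : ℝ))
          - (γ * (A - j + 1) * (if j = 0 then 0 else c (j - 1))) *
            r ^ ((j : ℝ) * γ - ((k:ℝ)+1)) * (1 - r ^ γ) ^ (A - (j : ℝ)) := by
    intro j _
    push_cast
    ring
  rw [Finset.sum_congr rfl expand, Finset.sum_sub_distrib]
  -- first sum: top term vanishes
  rw [Finset.sum_range_succ (fun j => (((j : ℝ) * γ - (k:ℝ)) * c j) * r ^ ((j : ℝ) * γ - ((k:ℝ)+1)) * (1 - r ^ γ) ^ (A - (j : ℝ))) (k+1)]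
  rw [hc]
  -- second sum : shift index
  rw [Finset.sum_range_succ' (fun j => (γ * (A - j + 1) * (if j = 0 then 0 else c (j - 1))) * r ^ ((j : ℝ) * γ - ((k:ℝ)+1)) * (1 - r ^ γ) ^ (A - (j : ℝ))) (k+1)]
  simp only [reduceIte, Nat.succ_ne_zero, if_false, Nat.add_sub_cancel, mul_zero, zero_mul,
    add_zero, sub_zero, if_true]
  rw [← Finset.sum_sub_distrib]
  apply Finset.sum_congr rfl
  intro j _
  have hkey := key_alg (γ := γ) hr0 (c j) (A - (j:ℝ)) ((j:ℝ) * γ) (k:ℝ)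
  push_cast
  rw [show ((j:ℝ)+1)*γ - ((k:ℝ)+1) = (j:ℝ)*γ + γ - ((k:ℝ)+1) by ring,
    show A - ((j:ℝ)+1) = A - (j:ℝ) - 1 by ring]
  linear_combination -hkey

variable {N : ℕ}

local notation "E'" => EuclideanSpace ℝ (Fin N)

lemma mem_punctured_ball {x : E'} (hx : x ∈ ball (0 : E') 1 \ {0}) :
    ‖x‖ ∈ Set.Ioo (0:ℝ) 1 ∧ x ≠ 0 := by
  obtain ⟨hb, hs⟩ := hx
  have hx0 : x ≠ 0 := hs
  refine ⟨⟨norm_pos_iff.2 hx0, ?_⟩, hx0⟩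
  simpa [dist_eq_norm] using mem_ball.1 hb

lemma eLaplacian_radial {g g1 g2 : ℝ → ℝ}
    (hg : ∀ r ∈ Set.Ioo (0:ℝ) 1, HasDerivAt g (g1 r) r)
    (hg1 : ∀ r ∈ Set.Ioo (0:ℝ) 1, HasDerivAt g1 (g2 r) r)
    {u : E' → ℝ} (hu : ∀ y ∈ ball (0 : E') 1 \ {0}, u y = g ‖y‖)
    {x : E'} (hx : x ∈ ball (0 : E') 1 \ {0}) :
    eLaplacian N u x = g2 ‖x‖ + (N - 1) * g1 ‖x‖ / ‖x‖ := by
  obtain ⟨hrIoo, hx0⟩ := mem_punctured_ball hx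
  set s : Set E' := ball (0 : E') 1 \ {0} with hs_def
  have hs_open : IsOpen s := isOpen_ball.sdiff isClosed_singleton
  set r := ‖x‖ with hr_def
  obtain ⟨hr0, hr1⟩ := hrIoo
  -- ψ and its derivative
  set ψ : ℝ → ℝ := fun t => g1 t * t⁻¹ with hψ_def
  have hψ : ∀ t ∈ Set.Ioo (0:ℝ) 1, HasDerivAt ψ (g2 t * t⁻¹ + g1 t * (-(t^2)⁻¹)) t := by
    intro t ht
    exact (hg1 t ht).mul (hasDerivAt_inv ht.1.ne')
  -- the explicit derivative function
  set V : E' → (E' →L[ℝ] ℝ) := fun y => ψ ‖y‖ • innerSL ℝ y with hV_def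
  -- fderiv u agrees with V on s
  have hfd : ∀ y ∈ s, fderiv ℝ u y = V y := by
    intro y hy
    obtain ⟨hyIoo, hy0⟩ := mem_punctured_ball hy
    have hev : u =ᶠ[nhds y] fun z => g ‖z‖ :=
      eventually_of_mem (hs_open.mem_nhds hy) hu
    rw [hev.fderiv_eq, (radial_hasFDerivAt hy0 (hg ‖y‖ hyIoo)).fderiv]
  -- V is differentiable at x
  have hψx : HasFDerivAt (fun y : E' => ψ ‖y‖)
      (((g2 r * r⁻¹ + g1 r * (-(r^2)⁻¹)) * r⁻¹) • innerSL ℝ x) x :=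
    radial_hasFDerivAt hx0 (hψ r ⟨hr0, hr1⟩)
  have hVdiff : DifferentiableAt ℝ V x := by
    apply DifferentiableAt.fun_smul
    · exact hψx.differentiableAt
    · exact (innerSL ℝ : E' →L[ℝ] E' →L[ℝ] ℝ).differentiableAt
  have hevV : fderiv ℝ u =ᶠ[nhds x] V :=
    eventually_of_mem (hs_open.mem_nhds hx) hfd
  have hΦdiff : DifferentiableAt ℝ (fderiv ℝ u) x :=
    (hevV.differentiableAt_iff).2 hVdiff
  -- pointwise computation for each coordinate
  have hcoord : ∀ i : Fin N,
      iteratedFDeriv ℝ 2 u x ![EuclideanSpace.single i 1, EuclideanSpace.single i 1] =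
        ((g2 r * r⁻¹ + g1 r * (-(r^2)⁻¹)) * r⁻¹) * (x i) * (x i) + ψ r := by
    intro i
    set e : E' := EuclideanSpace.single i 1 with he_def
    rw [iteratedFDeriv_two_apply]
    simp only [Matrix.cons_val_zero, Matrix.cons_val_one, Matrix.head_cons]
    -- reduce to fderiv of y ↦ fderiv u y e
    have h1 : fderiv ℝ (fun y => fderiv ℝ u y e) x =
        (fderiv ℝ (fderiv ℝ u) x).flip e := by
      rw [fderiv_clm_apply hΦdiff (differentiableAt_const e)]
      simp
    have h2 : fderiv ℝ (fderiv ℝ u) x e e = fderiv ℝ (fun y => fderiv ℝ u y e) x e := by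
      rw [h1]; rfl
    rw [h2]
    -- now compute fderiv of y ↦ fderiv u y e = ψ ‖y‖ * ⟪y, e⟫ near x
    have hev2 : (fun y => fderiv ℝ u y e) =ᶠ[nhds x]
        (fun y => ψ ‖y‖ * (inner ℝ y e : ℝ)) := by
      filter_upwards [eventually_of_mem (hs_open.mem_nhds hx) hfd] with y hy
      rw [hy]; rfl
    rw [hev2.fderiv_eq]
    have hb : HasFDerivAt (fun y : E' => (inner ℝ y e : ℝ)) (innerSL ℝ e) x := by
      have : (fun y : E' => (inner ℝ y e : ℝ)) = fun y => (innerSL ℝ e) y := by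
        funext y
        simp only [innerSL_apply_apply]
        exact real_inner_comm e y
      rw [this]
      exact (innerSL ℝ e).hasFDerivAt
    have hmul := hψx.fun_mul hb
    rw [hmul.fderiv]
    simp only [ContinuousLinearMap.add_apply, ContinuousLinearMap.smul_apply,
      innerSL_apply_apply, smul_eq_mul]
    have hxe : (inner ℝ x e : ℝ) = x i := by
      simp [he_def, EuclideanSpace.inner_single_right]
    have hee : (inner ℝ e e : ℝ) = 1 := by
      simp [he_def, EuclideanSpace.inner_single_right, EuclideanSpace.single_apply]
    rw [hxe, hee]
    ring
  -- sum up
  unfold eLaplacian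
  rw [Finset.sum_congr rfl (fun i _ => hcoord i)]
  rw [Finset.sum_add_distrib, Finset.sum_const, Finset.card_univ, Fintype.card_fin]
  have hinner : ∑ i : Fin N, (x i) * (x i) = r ^ 2 := by
    have h1 : (inner ℝ x x : ℝ) = ∑ i : Fin N, (x i) * (x i) := by
      rw [PiLp.inner_apply]
      simp [RCLike.inner_apply, sq]
    have h2 : (inner ℝ x x : ℝ) = ‖x‖ ^ 2 := real_inner_self_eq_norm_sq x
    rw [← h1, h2]
  have hsumsq : ∑ i : Fin N, ((g2 r * r⁻¹ + g1 r * (-(r^2)⁻¹)) * r⁻¹) * (x i) * (x i)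
      = ((g2 r * r⁻¹ + g1 r * (-(r^2)⁻¹)) * r⁻¹) * r^2 := by
    rw [← hinner, Finset.mul_sum]
    apply Finset.sum_congr rfl
    intro i _
    ring
  rw [hsumsq, nsmul_eq_mul]
  have hψr : ψ r = g1 r * r⁻¹ := rfl
  rw [hψr]
  field_simp
  ring


noncomputable def dcoef (γ A NN : ℝ) : ℕ → (ℕ → ℝ)
  | 0 => fun j => if j = 0 then 1 else 0
  | m + 1 => fun j =>
      cstep γ A (2 * m + 1) (cstep γ A (2 * m) (dcoef γ A NN m)) j
        + (NN - 1) * cstep γ A (2 * m) (dcoef γ A NN m) j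

section coeffs
variable {γ A NN : ℝ}

lemma cstep_supp {k : ℕ} {c : ℕ → ℝ} (hc : ∀ j, k < j → c j = 0) :
    ∀ j, k + 1 < j → cstep γ A k c j = 0 := by
  intro j hj
  have h1 : c j = 0 := hc j (by omega)
  have h2 : (if j = 0 then (0:ℝ) else c (j - 1)) = 0 := by
    rw [if_neg (by omega)]
    exact hc (j - 1) (by omega)
  simp [cstep, h1, h2]

lemma dcoef_supp : ∀ m j, 2 * m < j → dcoef γ A NN m j = 0 := by
  intro m
  induction m with
  | zero => intro j hj; simp [dcoef]; omega
  | succ m ih =>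
    intro j hj
    have h1 := cstep_supp (γ := γ) (A := A) ih
    have h2 := cstep_supp (γ := γ) (A := A) h1
    have e1 : h1 = h1 := rfl
    show cstep γ A (2 * m + 1) (cstep γ A (2 * m) (dcoef γ A NN m)) j
        + (NN - 1) * cstep γ A (2 * m) (dcoef γ A NN m) j = 0
    rw [h2 j (by omega), h1 j (by omega)]
    ring

lemma cstep_top {k : ℕ} {c : ℕ → ℝ} (hc : c (k + 1) = 0) :
    cstep γ A k c (k + 1) = -γ * (A - k) * c k := by
  unfold cstep
  rw [if_neg (Nat.succ_ne_zero k), Nat.add_sub_cancel, hc]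
  push_cast
  ring

lemma cstep_zero {k : ℕ} {c : ℕ → ℝ} : cstep γ A k c 0 = -(k : ℝ) * c 0 := by
  simp [cstep]

lemma dcoef_zero : ∀ m, 1 ≤ m → dcoef γ A NN m 0 = 0 := by
  intro m
  induction m with
  | zero => omega
  | succ m ih =>
    intro _
    show cstep γ A (2 * m + 1) (cstep γ A (2 * m) (dcoef γ A NN m)) 0
        + (NN - 1) * cstep γ A (2 * m) (dcoef γ A NN m) 0 = 0
    rw [cstep_zero, cstep_zero]
    rcases Nat.eq_zero_or_pos m with hm | hm
    · subst hm; norm_num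
    · rw [ih hm]; ring

lemma dcoef_top : ∀ m, dcoef γ A NN m (2 * m) =
    (-γ) ^ (2 * m) * ∏ ℓ ∈ Finset.Icc 1 (2 * m), (A - (ℓ : ℝ) + 1) := by
  intro m
  induction m with
  | zero => simp [dcoef]
  | succ m ih =>
    have hsupp := dcoef_supp (γ := γ) (A := A) (NN := NN) m
    have hs1 := cstep_supp (γ := γ) (A := A) hsupp
    have h20 : dcoef γ A NN m (2 * m + 1) = 0 := hsupp _ (by omega)
    have h21 : cstep γ A (2 * m) (dcoef γ A NN m) (2 * m + 2) = 0 := hs1 _ (by omega)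
    have e1 : cstep γ A (2 * m) (dcoef γ A NN m) (2 * m + 1) =
        -γ * (A - (2 * m : ℕ)) * dcoef γ A NN m (2 * m) := cstep_top h20
    have e2 : cstep γ A (2 * m + 1) (cstep γ A (2 * m) (dcoef γ A NN m)) (2 * m + 2) =
        -γ * (A - (2 * m + 1 : ℕ)) * cstep γ A (2 * m) (dcoef γ A NN m) (2 * m + 1) :=
      cstep_top h21
    show cstep γ A (2 * m + 1) (cstep γ A (2 * m) (dcoef γ A NN m)) (2 * (m + 1))
        + (NN - 1) * cstep γ A (2 * m) (dcoef γ A NN m) (2 * (m + 1)) = _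
    have hn : 2 * (m + 1) = 2 * m + 2 := by ring
    rw [hn, e2, e1, h21, ih]
    have hp1 : ∏ ℓ ∈ Finset.Icc 1 (2 * m + 2), (A - (ℓ : ℝ) + 1) =
        (∏ ℓ ∈ Finset.Icc 1 (2 * m + 1), (A - (ℓ : ℝ) + 1)) * (A - ((2 * m + 2 : ℕ) : ℝ) + 1) :=
      Finset.prod_Icc_succ_top (by omega) _
    have hp2 : ∏ ℓ ∈ Finset.Icc 1 (2 * m + 1), (A - (ℓ : ℝ) + 1) =
        (∏ ℓ ∈ Finset.Icc 1 (2 * m), (A - (ℓ : ℝ) + 1)) * (A - ((2 * m + 1 : ℕ) : ℝ) + 1) :=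
      Finset.prod_Icc_succ_top (by omega) _
    rw [show 2 * m + 2 = 2 * m + 1 + 1 from rfl] at hp1 ⊢
    rw [hp1, hp2]
    push_cast
    ring

lemma cS_eq_Icc {k : ℕ} {c : ℕ → ℝ} (hc : c 0 = 0) (r : ℝ) :
    cS γ A k c r = ∑ j ∈ Finset.Icc 1 k, c j * r ^ ((j : ℝ) * γ - k) * (1 - r ^ γ) ^ (A - (j : ℝ)) := by
  unfold cS
  have h : Finset.range (k + 1) = insert 0 (Finset.Icc 1 k) := by
    ext j
    simp [Finset.mem_range, Finset.mem_Icc, Finset.mem_insert]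
    omega
  rw [h, Finset.sum_insert (by simp)]
  rw [hc]
  simp

lemma cS_div_r {k : ℕ} {c : ℕ → ℝ} {r : ℝ} (hr0 : 0 < r) (hc : c (k + 2) = 0) :
    cS γ A (k + 1) c r / r = cS γ A (k + 2) c r := by
  unfold cS
  rw [Finset.sum_div]
  conv_rhs => rw [Finset.sum_range_succ]
  rw [hc]
  simp only [zero_mul, add_zero]
  apply Finset.sum_congr rfl
  intro j _
  have h1 : (j : ℝ) * γ - ((k + 2 : ℕ) : ℝ) = ((j : ℝ) * γ - ((k + 1 : ℕ) : ℝ)) - 1 := by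
    push_cast; ring
  rw [h1, Real.rpow_sub_one hr0.ne']
  ring
end coeffs

section main
variable {N : ℕ} {γ A : ℝ}

lemma iter_radial (hγ : 0 < γ) (m : ℕ) :
    ∀ x ∈ ball (0 : EuclideanSpace ℝ (Fin N)) 1 \ {0},
      iterLaplacian N m (fun y => (1 - ‖y‖ ^ γ) ^ A) x =
        cS γ A (2 * m) (dcoef γ A N m) ‖x‖ := by
  induction m with
  | zero =>
    intro x hx
    show (1 - ‖x‖ ^ γ) ^ A = _
    simp [cS, dcoef]
  | succ m ih =>
    intro x hx
    obtain ⟨hr, hx0⟩ := mem_punctured_ball hx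
    have hsupp := dcoef_supp (γ := γ) (A := A) (NN := (N:ℝ)) m
    have hs1 := cstep_supp (γ := γ) (A := A) hsupp
    have hg : ∀ r ∈ Set.Ioo (0:ℝ) 1, HasDerivAt (cS γ A (2*m) (dcoef γ A N m))
        (cS γ A (2*m+1) (cstep γ A (2*m) (dcoef γ A N m)) r) r :=
      fun r hr => hasDerivAt_cS hγ _ _ (hsupp _ (by omega)) hr
    have hg1 : ∀ r ∈ Set.Ioo (0:ℝ) 1, HasDerivAt (cS γ A (2*m+1) (cstep γ A (2*m) (dcoef γ A N m)))
        (cS γ A (2*m+2) (cstep γ A (2*m+1) (cstep γ A (2*m) (dcoef γ A N m))) r) r :=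
      fun r hr => hasDerivAt_cS hγ _ _ (hs1 _ (by omega)) hr
    show eLaplacian N (iterLaplacian N m (fun y => (1 - ‖y‖ ^ γ) ^ A)) x = _
    rw [eLaplacian_radial hg hg1 ih hx]
    rw [mul_div_assoc, cS_div_r hr.1 (hs1 _ (by omega))]
    show cS γ A (2*m+2) (cstep γ A (2*m+1) (cstep γ A (2*m) (dcoef γ A N m))) ‖x‖
        + ((N:ℝ) - 1) * cS γ A (2*m+2) (cstep γ A (2*m) (dcoef γ A N m)) ‖x‖ = _
    unfold cS
    rw [Finset.mul_sum, ← Finset.sum_add_distrib]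
    rw [show 2 * (m+1) = 2*m+2 by ring]
    apply Finset.sum_congr rfl
    intro j _
    show _ = (cstep γ A (2 * m + 1) (cstep γ A (2 * m) (dcoef γ A (↑N) m)) j
        + ((N:ℝ) - 1) * cstep γ A (2 * m) (dcoef γ A (↑N) m) j) * _ * _
    ring

lemma iter_gradient (hγ : 0 < γ) (m : ℕ) :
    ∀ x ∈ ball (0 : EuclideanSpace ℝ (Fin N)) 1 \ {0},
      gradient (iterLaplacian N m (fun y => (1 - ‖y‖ ^ γ) ^ A)) x =
        cS γ A (2*m+1) (cstep γ A (2*m) (dcoef γ A N m)) ‖x‖ • (‖x‖⁻¹ • x) := by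
  intro x hx
  obtain ⟨hr, hx0⟩ := mem_punctured_ball hx
  have hs_open : IsOpen (ball (0 : EuclideanSpace ℝ (Fin N)) 1 \ {0}) :=
    isOpen_ball.sdiff isClosed_singleton
  have hsupp := dcoef_supp (γ := γ) (A := A) (NN := (N:ℝ)) m
  have hev : iterLaplacian N m (fun y => (1 - ‖y‖ ^ γ) ^ A) =ᶠ[nhds x]
      fun y => cS γ A (2 * m) (dcoef γ A N m) ‖y‖ :=
    eventually_of_mem (hs_open.mem_nhds hx) (iter_radial hγ m)
  have hgrad : HasGradientAt (fun y : EuclideanSpace ℝ (Fin N) => cS γ A (2 * m) (dcoef γ A N m) ‖y‖)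
      (cS γ A (2*m+1) (cstep γ A (2*m) (dcoef γ A N m)) ‖x‖ • (‖x‖⁻¹ • x)) x :=
    radial_hasGradientAt hx0 (hasDerivAt_cS hγ _ _ (hsupp _ (by omega)) hr)
  rw [hasGradientAt_iff_hasFDerivAt] at hgrad
  simpa using (hgrad.congr_of_eventuallyEq hev).hasGradientAt.gradient

end main

theorem stmt_18 (N : ℕ) (hN : 2 ≤ N) (γ A : ℝ) (hγ : 0 < γ) (k : ℕ) (hk : 1 ≤ k) :
    ∃ C : ℕ → ℝ,
      C k = (-γ) ^ k * ∏ ℓ ∈ Finset.Icc 1 k, (A - (ℓ : ℝ) + 1) ∧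
      ∀ x ∈ ball (0 : EuclideanSpace ℝ (Fin N)) 1 \ {0},
        (∀ m : ℕ, k = 2 * m →
          iterLaplacian N m (fun y => (1 - ‖y‖ ^ γ) ^ A) x =
            ∑ j ∈ Finset.Icc 1 k,
              C j * ‖x‖ ^ ((j : ℝ) * γ - k) * (1 - ‖x‖ ^ γ) ^ (A - j)) ∧
        (∀ m : ℕ, k = 2 * m + 1 →
          gradient (iterLaplacian N m (fun y => (1 - ‖y‖ ^ γ) ^ A)) x =
            (∑ j ∈ Finset.Icc 1 k,
              C j * ‖x‖ ^ ((j : ℝ) * γ - k) * (1 - ‖x‖ ^ γ) ^ (A - j)) • (‖x‖⁻¹ • x)) := by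
  rcases Nat.even_or_odd k with ⟨m, hm⟩ | ⟨m, hm⟩
  · -- even case : k = 2 * m
    have hm' : k = 2 * m := by omega
    subst hm'
    have hm1 : 1 ≤ m := by omega
    refine ⟨dcoef γ A N m, dcoef_top m, ?_⟩
    intro x hx
    constructor
    · intro m' hm'
      have hmm : m' = m := by omega
      rw [hmm, iter_radial hγ m x hx, cS_eq_Icc (dcoef_zero m hm1)]
    · intro m' hm'
      omega
  · -- odd case : k = 2 * m + 1
    subst hm
    have hsupp := dcoef_supp (γ := γ) (A := A) (NN := (N:ℝ)) m
    have hC0 : cstep γ A (2*m) (dcoef γ A N m) 0 = 0 := by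
      rw [cstep_zero]
      rcases Nat.eq_zero_or_pos m with h | h
      · subst h; norm_num
      · rw [dcoef_zero m h]; ring
    have hCk : cstep γ A (2*m) (dcoef γ A N m) (2*m+1) =
        (-γ) ^ (2*m+1) * ∏ ℓ ∈ Finset.Icc 1 (2*m+1), (A - (ℓ : ℝ) + 1) := by
      rw [cstep_top (hsupp _ (by omega)), dcoef_top m,
        Finset.prod_Icc_succ_top (by omega) (fun ℓ => A - (ℓ : ℝ) + 1)]
      push_cast
      ring
    refine ⟨cstep γ A (2*m) (dcoef γ A N m), hCk, ?_⟩
    intro x hx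
    constructor
    · intro m' hm'
      omega
    · intro m' hm'
      have hmm : m' = m := by omega
      rw [hmm, iter_gradient hγ m x hx, cS_eq_Icc hC0]
end

section
/- Let p ∈ (1, 2). There exists a constant C₂ > 0 such that for all a, b ∈ ℝ with (a,b) ≠ (0,0), |a − b|^p − |a|^p + p|a|^{p−2}ab ≥ C₂·b²/(|a−b| + |a|)^{2−p}. -/
open Real

-- derivative of |t|^p
lemma stmt19aux_L1 (p : ℝ) (hp1 : 1 < p) (s : ℝ) :
    HasDerivAt (fun t : ℝ => |t| ^ p) (p * s * |s| ^ (p - 2)) s := by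
  rcases lt_trichotomy s 0 with hs | rfl | hs
  · have h1 : HasDerivAt (fun t : ℝ => (-t) ^ p) (p * (-s) ^ (p-1) * (-1)) s := by
      exact (Real.hasDerivAt_rpow_const (Or.inl (neg_ne_zero.2 hs.ne))).comp s (hasDerivAt_neg s)
    have h2 : (fun t : ℝ => |t| ^ p) =ᶠ[nhds s] fun t => (-t) ^ p := by
      filter_upwards [eventually_lt_nhds hs] with t ht
      rw [abs_of_neg ht]
    have h3 : p * s * |s| ^ (p-2) = p * (-s) ^ (p-1) * (-1) := by
      rw [abs_of_neg hs]
      have : (-s) ^ (p-1) = (-s) ^ (p-2) * (-s) := by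
        rw [← Real.rpow_add_one (neg_ne_zero.2 hs.ne)]; ring_nf
      rw [this]; ring
    exact h3 ▸ h1.congr_of_eventuallyEq h2
  · simp only [mul_zero, zero_mul]
    rw [hasDerivAt_iff_isLittleO]
    simp only [abs_zero, Real.zero_rpow (by positivity : p ≠ 0), sub_zero, smul_zero, sub_zero]
    rw [Asymptotics.isLittleO_iff]
    intro c hc
    have h : ∀ᶠ t : ℝ in nhds 0, |t| ≤ c ^ (1/(p-1)) := by
      have : (0:ℝ) < c ^ (1/(p-1)) := Real.rpow_pos_of_pos hc _
      filter_upwards [Metric.ball_mem_nhds 0 this] with t ht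
      rw [Metric.mem_ball, Real.dist_eq, sub_zero] at ht
      exact ht.le
    filter_upwards [h] with t ht
    have h1 : |t| ^ p = |t| ^ (p-1) * |t| := by
      rcases eq_or_ne t 0 with rfl | ht0
      · simp [Real.zero_rpow (by linarith : p ≠ 0)]
      · rw [← Real.rpow_add_one (abs_ne_zero.2 ht0), sub_add_cancel]
    have h2 : |t| ^ (p-1) ≤ c := by
      calc |t| ^ (p-1) ≤ (c ^ (1/(p-1))) ^ (p-1) :=
            Real.rpow_le_rpow (abs_nonneg t) ht (by linarith)
        _ = c := by
            rw [← Real.rpow_mul hc.le, one_div, inv_mul_cancel₀ (by linarith : p - 1 ≠ 0),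
              Real.rpow_one]
    calc ‖|t| ^ p‖ = |t| ^ (p-1) * |t| := by
          rw [Real.norm_eq_abs, abs_of_nonneg (Real.rpow_nonneg (abs_nonneg t) p), h1]
      _ ≤ c * ‖t‖ := by
          rw [Real.norm_eq_abs]
          exact mul_le_mul_of_nonneg_right h2 (abs_nonneg t)
  · have h1 : HasDerivAt (fun t : ℝ => t ^ p) (p * s ^ (p-1)) s :=
      Real.hasDerivAt_rpow_const (Or.inl hs.ne')
    have h2 : (fun t : ℝ => |t| ^ p) =ᶠ[nhds s] fun t => t ^ p := by
      filter_upwards [eventually_gt_nhds hs] with t ht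
      rw [abs_of_pos ht]
    have h3 : p * s * |s| ^ (p-2) = p * s ^ (p-1) := by
      rw [abs_of_pos hs]
      have : s ^ (p-1) = s ^ (p-2) * s := by
        rw [← Real.rpow_add_one hs.ne']; ring_nf
      rw [this]; ring
    exact h3 ▸ h1.congr_of_eventuallyEq h2


-- x * x^(p-2) = x^(p-1) for x ≥ 0
lemma stmt19aux_Lxx (p : ℝ) (hp1 : 1 < p) (x : ℝ) (hx : 0 ≤ x) : x * x ^ (p - 2) = x ^ (p - 1) := by
  rcases eq_or_lt_of_le hx with rfl | hx0
  · simp [Real.zero_rpow (show p - 1 ≠ 0 by linarith)]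
  · rw [mul_comm, ← Real.rpow_add_one hx0.ne']
    congr 1; ring

lemma stmt19aux_LD (p : ℝ) (hp1 : 1 < p) (s : ℝ) :
    HasDerivAt (fun t : ℝ => |t - 1| ^ p - 1 + p * t)
      (p * (s - 1) * |s - 1| ^ (p - 2) + p) s := by
  have h1 : HasDerivAt (fun t : ℝ => |t - 1| ^ p) (p * (s-1) * |s-1| ^ (p-2) * 1) s := by
    have := (stmt19aux_L1 p hp1 (s - 1)).comp s ((hasDerivAt_id s).sub_const 1); exact this
  have h2 : HasDerivAt (fun t : ℝ => p * t) (p * 1) s := (hasDerivAt_id s).const_mul p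
  have := (h1.sub_const 1).add h2; simp only [mul_one] at this; exact this

lemma stmt19aux_Lcont (p : ℝ) (hp1 : 1 < p) (hp2 : p < 2) :
    Continuous (fun s : ℝ => p * (s - 1) * |s - 1| ^ (p - 2) + p) := by
  have key : Continuous (fun x : ℝ => x * |x| ^ (p - 2)) := by
    rw [continuous_iff_continuousAt]
    intro x
    rcases eq_or_ne x 0 with rfl | hx
    · have hb : ∀ t : ℝ, ‖t * |t| ^ (p - 2)‖ ≤ |t| ^ (p - 1) := by
        intro t
        rw [Real.norm_eq_abs, abs_mul, abs_of_nonneg (Real.rpow_nonneg (abs_nonneg t) _)]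
        exact le_of_eq (stmt19aux_Lxx p hp1 |t| (abs_nonneg t))
      have htend : Filter.Tendsto (fun x : ℝ => |x| ^ (p - 1)) (nhds 0) (nhds 0) := by
        have hc : ContinuousAt (fun x : ℝ => |x| ^ (p - 1)) 0 :=
          (Real.continuousAt_rpow_const _ _ (Or.inr (by linarith))).comp
            continuous_abs.continuousAt
        simpa [ContinuousAt, Real.zero_rpow (show p - 1 ≠ 0 by linarith)] using hc
      have main : Filter.Tendsto (fun x : ℝ => x * |x| ^ (p - 2)) (nhds 0) (nhds 0) :=
        squeeze_zero_norm hb htend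
      simpa [ContinuousAt] using main
    · exact continuousAt_id.mul ((Real.continuousAt_rpow_const _ _
        (Or.inl (abs_ne_zero.2 hx))).comp continuous_abs.continuousAt)
  have h2 : Continuous (fun s : ℝ => (s - 1) * |s - 1| ^ (p - 2)) :=
    key.comp (continuous_id.sub continuous_const)
  have heq : (fun s : ℝ => p * (s - 1) * |s - 1| ^ (p - 2) + p)
      = fun s : ℝ => p * ((s - 1) * |s - 1| ^ (p - 2)) + p := by
    funext s; ring
  rw [heq]
  exact (continuous_const.mul h2).add continuous_const

lemma stmt19aux_LBpos (p : ℝ) (hp1 : 1 < p) (hp2 : p < 2) (s : ℝ) (hs : 0 ≤ s) :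
    p * (p - 1) / 4 * s * (1 + s) ^ (p - 2) ≤ p * (s - 1) * |s - 1| ^ (p - 2) + p := by
  have hp0 : 0 < p := by linarith
  have hc4 : (0:ℝ) ≤ p * (p - 1) / 4 := by nlinarith [mul_pos hp0 (show (0:ℝ) < p - 1 by linarith)]
  have hc4s : (0:ℝ) ≤ p * (p - 1) / 4 * s := mul_nonneg hc4 hs
  have h1s : (0:ℝ) < 1 + s := by linarith
  rcases le_total s 1 with h1 | h1
  · -- 0 ≤ s ≤ 1
    have habs : |s - 1| = 1 - s := by rw [abs_of_nonpos (by linarith)]; ring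
    have hkey : p * (s - 1) * |s - 1| ^ (p - 2) = -(p * (1 - s) ^ (p - 1)) := by
      rw [habs, ← stmt19aux_Lxx p hp1 (1 - s) (by linarith)]; ring
    rw [hkey]
    have hbern : (1 - s) ^ (p - 1) ≤ 1 - (p - 1) * s := by
      have := rpow_one_add_le_one_add_mul_self (s := -s) (p := p - 1)
        (by linarith) (by linarith) (by linarith)
      have he : (1 : ℝ) + -s = 1 - s := by ring
      rw [he] at this
      linarith
    have hle1 : (1 + s) ^ (p - 2) ≤ 1 :=
      Real.rpow_le_one_of_one_le_of_nonpos (by linarith) (by linarith)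
    have h2 : p * (p - 1) / 4 * s * (1 + s) ^ (p - 2) ≤ p * (p - 1) / 4 * s := by
      nth_rewrite 2 [← mul_one (p * (p - 1) / 4 * s)]
      exact mul_le_mul_of_nonneg_left hle1 hc4s
    nlinarith [mul_le_mul_of_nonneg_left hbern hp0.le, h2,
      mul_nonneg (mul_nonneg hp0.le (show (0:ℝ) ≤ p - 1 by linarith)) hs]
  · -- s ≥ 1
    have habs : |s - 1| = s - 1 := abs_of_nonneg (by linarith)
    have hkey : p * (s - 1) * |s - 1| ^ (p - 2) = p * (s - 1) ^ (p - 1) := by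
      rw [habs, ← stmt19aux_Lxx p hp1 (s - 1) (by linarith)]; ring
    rw [hkey]
    have hpow_nonneg : (0:ℝ) ≤ (s - 1) ^ (p - 1) := Real.rpow_nonneg (by linarith) _
    rcases le_total s 2 with h2 | h2
    · -- 1 ≤ s ≤ 2
      have hle1 : (1 + s) ^ (p - 2) ≤ 1 :=
        Real.rpow_le_one_of_one_le_of_nonpos (by linarith) (by linarith)
      have hL : p * (p - 1) / 4 * s * (1 + s) ^ (p - 2) ≤ p * (p - 1) / 4 * s := by
        nth_rewrite 2 [← mul_one (p * (p - 1) / 4 * s)]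
        exact mul_le_mul_of_nonneg_left hle1 hc4s
      nlinarith [hpow_nonneg, hL, mul_le_mul_of_nonneg_left h2 hc4,
        mul_nonneg hp0.le (show (0:ℝ) ≤ 3 - p by linarith)]
    · -- s ≥ 2
      have hs0 : (0:ℝ) < s := by linarith
      have hA : (1 + s) ^ (p - 2) ≤ s ^ (p - 2) :=
        Real.rpow_le_rpow_of_nonpos hs0 (by linarith) (by linarith)
      have hL : p * (p - 1) / 4 * s * (1 + s) ^ (p - 2) ≤ p * (p - 1) / 4 * s ^ (p - 1) := by
        calc p * (p - 1) / 4 * s * (1 + s) ^ (p - 2)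
            ≤ p * (p - 1) / 4 * s * s ^ (p - 2) :=
              mul_le_mul_of_nonneg_left hA hc4s
          _ = p * (p - 1) / 4 * (s * s ^ (p - 2)) := by ring
          _ = p * (p - 1) / 4 * s ^ (p - 1) := by rw [stmt19aux_Lxx p hp1 s hs0.le]
      have hR : p / 2 * s ^ (p - 1) ≤ p * (s - 1) ^ (p - 1) := by
        have hhalf : (s / 2) ^ (p - 1) ≤ (s - 1) ^ (p - 1) :=
          Real.rpow_le_rpow (by linarith) (by linarith) (by linarith)
        have hdiv : (s / 2) ^ (p - 1) = s ^ (p - 1) / 2 ^ (p - 1) :=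
          Real.div_rpow hs0.le (by norm_num : (0:ℝ) ≤ 2) (p - 1)
        have h2p : (2:ℝ) ^ (p - 1) ≤ 2 := by
          calc (2:ℝ) ^ (p - 1) ≤ (2:ℝ) ^ (1:ℝ) :=
                Real.rpow_le_rpow_of_exponent_le (by norm_num) (by linarith)
            _ = 2 := Real.rpow_one 2
        have h2pos : (0:ℝ) < 2 ^ (p - 1) := Real.rpow_pos_of_pos (by norm_num) _
        have hspos : (0:ℝ) ≤ s ^ (p - 1) := Real.rpow_nonneg hs0.le _
        have : s ^ (p - 1) / 2 ≤ s ^ (p - 1) / 2 ^ (p - 1) := by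
          apply div_le_div_of_nonneg_left hspos h2pos h2p
        calc p / 2 * s ^ (p - 1) = p * (s ^ (p - 1) / 2) := by ring
          _ ≤ p * (s ^ (p - 1) / 2 ^ (p - 1)) := mul_le_mul_of_nonneg_left this hp0.le
          _ = p * (s / 2) ^ (p - 1) := by rw [hdiv]
          _ ≤ p * (s - 1) ^ (p - 1) := mul_le_mul_of_nonneg_left hhalf hp0.le
      have hmid : p * (p - 1) / 4 * s ^ (p - 1) ≤ p / 2 * s ^ (p - 1) := by
        apply mul_le_mul_of_nonneg_right _ (Real.rpow_nonneg hs0.le _)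
        nlinarith
      nlinarith


lemma stmt19aux_LBneg (p : ℝ) (hp1 : 1 < p) (hp2 : p < 2) (s : ℝ) (hs : s ≤ 0) :
    p * (s - 1) * |s - 1| ^ (p - 2) + p ≤ p * (p - 1) / 4 * s * (1 - s) ^ (p - 2) := by
  have hp0 : 0 < p := by linarith
  have hA : (0:ℝ) < 1 - s := by linarith
  have habs : |s - 1| = 1 - s := by rw [abs_of_nonpos (by linarith)]; ring
  have hkey : p * (s - 1) * |s - 1| ^ (p - 2) = -(p * ((1 - s) * (1 - s) ^ (p - 2))) := by
    rw [habs]; ring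
  rw [hkey]
  have hbern : (1 + -s) ^ (2 - p) ≤ 1 + (2 - p) * -s :=
    rpow_one_add_le_one_add_mul_self (by linarith) (by linarith) (by linarith)
  have he : (1:ℝ) + -s = 1 - s := by ring
  rw [he] at hbern
  have hAp2 : (0:ℝ) < (1 - s) ^ (p - 2) := Real.rpow_pos_of_pos hA _
  have hmul : 1 ≤ (1 + (2 - p) * -s) * (1 - s) ^ (p - 2) := by
    have h1 : (1 - s) ^ (2 - p) * (1 - s) ^ (p - 2) = 1 := by
      rw [← Real.rpow_add hA]; norm_num
    calc (1:ℝ) = (1 - s) ^ (2 - p) * (1 - s) ^ (p - 2) := h1.symm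
      _ ≤ (1 + (2 - p) * -s) * (1 - s) ^ (p - 2) :=
          mul_le_mul_of_nonneg_right hbern hAp2.le
  have hZ : s * (1 - s) ^ (p - 2) ≤ 0 := mul_nonpos_of_nonpos_of_nonneg hs hAp2.le
  nlinarith [mul_le_mul_of_nonneg_left hmul hp0.le,
    mul_le_mul_of_nonpos_right (show p * (p - 1) / 4 ≤ p * (p - 1) by nlinarith) hZ]

lemma stmt19aux_LKey (p : ℝ) (hp1 : 1 < p) (hp2 : p < 2) (t : ℝ) :
    p * (p - 1) / 8 * t ^ 2 * (1 + |t|) ^ (p - 2) ≤ |t - 1| ^ p - 1 + p * t := by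
  have hp0 : 0 < p := by linarith
  set D : ℝ → ℝ := fun s => p * (s - 1) * |s - 1| ^ (p - 2) + p with hD
  have hFTC : ∫ s in (0:ℝ)..t, D s = |t - 1| ^ p - 1 + p * t := by
    have h := intervalIntegral.integral_eq_sub_of_hasDerivAt
      (f := fun u : ℝ => |u - 1| ^ p - 1 + p * u) (f' := D)
      (fun x _ => stmt19aux_LD p hp1 x) ((stmt19aux_Lcont p hp1 hp2).intervalIntegrable 0 t)
    rw [h]
    norm_num
  rw [← hFTC]
  rcases le_total 0 t with ht | ht
  · -- t ≥ 0
    have habs : |t| = t := abs_of_nonneg ht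
    rw [habs]
    have hcont : Continuous (fun s : ℝ => p * (p - 1) / 4 * (1 + t) ^ (p - 2) * s) := by
      continuity
    have hmono : ∫ s in (0:ℝ)..t, p * (p - 1) / 4 * (1 + t) ^ (p - 2) * s
        ≤ ∫ s in (0:ℝ)..t, D s := by
      apply intervalIntegral.integral_mono_on ht (hcont.intervalIntegrable 0 t)
        ((stmt19aux_Lcont p hp1 hp2).intervalIntegrable 0 t)
      intro s hsmem
      obtain ⟨hs0, hst⟩ := hsmem
      have hrp : (1 + t) ^ (p - 2) ≤ (1 + s) ^ (p - 2) :=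
        Real.rpow_le_rpow_of_nonpos (by linarith) (by linarith) (by linarith)
      have hc4s : (0:ℝ) ≤ p * (p - 1) / 4 * s :=
        mul_nonneg (by nlinarith [mul_pos hp0 (show (0:ℝ) < p - 1 by linarith)]) hs0
      calc p * (p - 1) / 4 * (1 + t) ^ (p - 2) * s
          = p * (p - 1) / 4 * s * (1 + t) ^ (p - 2) := by ring
        _ ≤ p * (p - 1) / 4 * s * (1 + s) ^ (p - 2) :=
            mul_le_mul_of_nonneg_left hrp hc4s
        _ ≤ D s := stmt19aux_LBpos p hp1 hp2 s hs0
    have hcomp : ∫ s in (0:ℝ)..t, p * (p - 1) / 4 * (1 + t) ^ (p - 2) * s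
        = p * (p - 1) / 4 * (1 + t) ^ (p - 2) * (t ^ 2 / 2) := by
      rw [intervalIntegral.integral_const_mul, integral_id]
      norm_num
    have : p * (p - 1) / 8 * t ^ 2 * (1 + t) ^ (p - 2)
        = p * (p - 1) / 4 * (1 + t) ^ (p - 2) * (t ^ 2 / 2) := by ring
    rw [this, ← hcomp]
    exact hmono
  · -- t ≤ 0
    have habs : |t| = -t := abs_of_nonpos ht
    rw [habs]
    have hcont : Continuous (fun s : ℝ => p * (p - 1) / 4 * (1 - t) ^ (p - 2) * s) := by
      continuity
    have hmono : ∫ s in t..(0:ℝ), D s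
        ≤ ∫ s in t..(0:ℝ), p * (p - 1) / 4 * (1 - t) ^ (p - 2) * s := by
      apply intervalIntegral.integral_mono_on ht ((stmt19aux_Lcont p hp1 hp2).intervalIntegrable t 0)
        (hcont.intervalIntegrable t 0)
      intro s hsmem
      obtain ⟨hts, hs0⟩ := hsmem
      have hrp : (1 - s) ^ (p - 2) ≥ (1 - t) ^ (p - 2) :=
        Real.rpow_le_rpow_of_nonpos (by linarith) (by linarith) (by linarith)
      calc D s ≤ p * (p - 1) / 4 * s * (1 - s) ^ (p - 2) := stmt19aux_LBneg p hp1 hp2 s hs0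
        _ ≤ p * (p - 1) / 4 * s * (1 - t) ^ (p - 2) := by
            have hc4s : p * (p - 1) / 4 * s ≤ 0 :=
              mul_nonpos_of_nonneg_of_nonpos
                (by nlinarith [mul_pos hp0 (show (0:ℝ) < p - 1 by linarith)]) hs0
            exact mul_le_mul_of_nonpos_left hrp hc4s
        _ = p * (p - 1) / 4 * (1 - t) ^ (p - 2) * s := by ring
    have hcomp : ∫ s in t..(0:ℝ), p * (p - 1) / 4 * (1 - t) ^ (p - 2) * s
        = - (p * (p - 1) / 4 * (1 - t) ^ (p - 2) * (t ^ 2 / 2)) := by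
      rw [intervalIntegral.integral_const_mul, integral_id]
      ring
    have hswap : ∫ s in (0:ℝ)..t, D s = - ∫ s in t..(0:ℝ), D s := by
      rw [intervalIntegral.integral_symm]
    rw [hswap]
    have : p * (p - 1) / 8 * t ^ 2 * (1 + -t) ^ (p - 2)
        = p * (p - 1) / 4 * (1 - t) ^ (p - 2) * (t ^ 2 / 2) := by ring_nf
    rw [this]
    linarith [hmono.trans_eq hcomp]


lemma stmt19aux_LGpos (p : ℝ) (hp1 : 1 < p) (hp2 : p < 2) (a b : ℝ) (ha : 0 < a) :
    p * (p - 1) / 8 * b ^ 2 * (a + |b|) ^ (p - 2) ≤ |a - b| ^ p - a ^ p + p * a ^ (p - 1) * b := by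
  have hap : (0:ℝ) < a ^ p := Real.rpow_pos_of_pos ha _
  have key := stmt19aux_LKey p hp1 hp2 (b / a)
  have hmul := mul_le_mul_of_nonneg_right key hap.le
  have hLHS : p * (p - 1) / 8 * (b / a) ^ 2 * (1 + |b / a|) ^ (p - 2) * a ^ p
      = p * (p - 1) / 8 * b ^ 2 * (a + |b|) ^ (p - 2) := by
    have hba : |b / a| = |b| / a := by rw [abs_div, abs_of_pos ha]
    have hsplit : a ^ p = a ^ (2:ℕ) * a ^ (p - 2) := by
      rw [← Real.rpow_natCast a 2, ← Real.rpow_add ha]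
      norm_num
    rw [hba, hsplit]
    have h1 : (1 + |b| / a) ^ (p - 2) * a ^ (p - 2) = (a + |b|) ^ (p - 2) := by
      rw [← Real.mul_rpow (by positivity) ha.le]
      congr 1
      field_simp
    have h2 : (b / a) ^ 2 * a ^ (2:ℕ) = b ^ 2 := by
      field_simp
    calc p * (p - 1) / 8 * (b / a) ^ 2 * (1 + |b| / a) ^ (p - 2) * (a ^ (2:ℕ) * a ^ (p - 2))
        = p * (p - 1) / 8 * ((b / a) ^ 2 * a ^ (2:ℕ)) *
            ((1 + |b| / a) ^ (p - 2) * a ^ (p - 2)) := by ring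
      _ = p * (p - 1) / 8 * b ^ 2 * (a + |b|) ^ (p - 2) := by rw [h1, h2]
  have h1 : |b / a - 1| ^ p * a ^ p = |a - b| ^ p := by
    rw [← Real.mul_rpow (abs_nonneg _) ha.le]
    congr 1
    calc |b / a - 1| * a = |(b / a - 1) * a| := by rw [abs_mul, abs_of_pos ha]
      _ = |a - b| := by
          rw [show (b / a - 1) * a = -(a - b) by field_simp; ring, abs_neg]
  have h2 : p * (b / a) * a ^ p = p * a ^ (p - 1) * b := by
    have hsplit : a ^ p = a ^ (p - 1) * a := by
      rw [← Real.rpow_add_one ha.ne']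
      congr 1
      ring
    rw [hsplit]
    field_simp
  have hRHS : (|b / a - 1| ^ p - 1 + p * (b / a)) * a ^ p
      = |a - b| ^ p - a ^ p + p * a ^ (p - 1) * b := by
    calc (|b / a - 1| ^ p - 1 + p * (b / a)) * a ^ p
        = |b / a - 1| ^ p * a ^ p - a ^ p + p * (b / a) * a ^ p := by ring
      _ = |a - b| ^ p - a ^ p + p * a ^ (p - 1) * b := by rw [h1, h2]
  rw [← hLHS, ← hRHS]
  exact hmul

lemma stmt19aux_LG (p : ℝ) (hp1 : 1 < p) (hp2 : p < 2) (a b : ℝ) (ha : a ≠ 0) :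
    p * (p - 1) / 8 * b ^ 2 * (|a| + |b|) ^ (p - 2)
      ≤ |a - b| ^ p - |a| ^ p + p * |a| ^ (p - 2) * a * b := by
  rcases ha.lt_or_gt with ha0 | ha0
  · have h := stmt19aux_LGpos p hp1 hp2 (-a) (-b) (by linarith)
    have e1 : -a + |-b| = |a| + |b| := by rw [abs_neg, abs_of_neg ha0]
    have e2 : |-a - -b| = |a - b| := by rw [show -a - -b = -(a - b) by ring, abs_neg]
    have e3 : (-a) ^ p = |a| ^ p := by rw [abs_of_neg ha0]
    have e4 : p * (-a) ^ (p - 1) * (-b) = p * |a| ^ (p - 2) * a * b := by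
      rw [abs_of_neg ha0, ← stmt19aux_Lxx p hp1 (-a) (by linarith)]
      ring
    rw [e1, e2, e3, e4] at h
    nlinarith [h, sq_nonneg b]
  · have h := stmt19aux_LGpos p hp1 hp2 a b ha0
    have e1 : p * a ^ (p - 1) * b = p * a ^ (p - 2) * a * b := by
      rw [← stmt19aux_Lxx p hp1 a ha0.le]
      ring
    rw [e1] at h
    simpa [abs_of_pos ha0] using h

theorem stmt_19 (p : ℝ) (hp1 : 1 < p) (hp2 : p < 2) :
    ∃ C₂ > (0:ℝ), ∀ a b : ℝ, (a, b) ≠ (0, 0) →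
      C₂ * b ^ 2 / (|a - b| + |a|) ^ (2 - p) ≤
        |a - b| ^ p - |a| ^ p + p * |a| ^ (p - 2) * a * b := by
  have hp0 : (0:ℝ) < p := by linarith
  have hC : (0:ℝ) < p * (p - 1) / 16 := by nlinarith
  refine ⟨p * (p - 1) / 16, hC, fun a b hab => ?_⟩
  by_cases ha : a = 0
  · subst ha
    have hb : b ≠ 0 := by simpa using hab
    have hbpos : (0:ℝ) < |b| := abs_pos.2 hb
    simp only [zero_sub, abs_neg, abs_zero, add_zero, sub_zero]
    rw [Real.zero_rpow (show p ≠ 0 by linarith)]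
    have e0 : p * (0:ℝ) ^ (p - 2) * 0 * b = 0 := by ring
    rw [e0]
    have hb2 : b ^ 2 = |b| ^ ((2:ℕ) : ℝ) := by
      rw [Real.rpow_natCast, sq_abs]
    have ediv : |b| ^ ((2:ℕ):ℝ) / |b| ^ (2 - p) = |b| ^ p := by
      rw [← Real.rpow_sub hbpos]
      norm_num
    calc p * (p - 1) / 16 * b ^ 2 / |b| ^ (2 - p)
        = p * (p - 1) / 16 * (|b| ^ ((2:ℕ):ℝ) / |b| ^ (2 - p)) := by rw [hb2]; ring
      _ = p * (p - 1) / 16 * |b| ^ p := by rw [ediv]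
      _ ≤ |b| ^ p + 0 := by
          have hc16 : p * (p - 1) / 16 ≤ 1 := by
            nlinarith [mul_pos (show (0:ℝ) < 2 - p by linarith) hp0]
          nlinarith [Real.rpow_nonneg (abs_nonneg b) p,
            mul_le_mul_of_nonneg_right hc16 (Real.rpow_nonneg (abs_nonneg b) p)]
      _ = |b| ^ p - 0 + 0 := by ring
  · have hG := stmt19aux_LG p hp1 hp2 a b ha
    set S := |a - b| + |a| with hSdef
    have hS : (0:ℝ) < S := by
      have : (0:ℝ) < |a| := abs_pos.2 ha
      have : (0:ℝ) ≤ |a - b| := abs_nonneg _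
      unfold S
      linarith [abs_pos.2 ha, abs_nonneg (a - b)]
    have hAB : (0:ℝ) < |a| + |b| := by
      have := abs_pos.2 ha
      linarith [abs_nonneg b]
    have hb : |b| ≤ |a - b| + |a| := by
      have h1 := abs_add_le (a - b) (-a)
      rw [show a - b + -a = -b by ring, abs_neg, abs_neg] at h1
      exact h1
    have h2S : |a| + |b| ≤ 2 * S := by
      unfold S
      have := abs_nonneg (a - b)
      linarith
    have hpow : (|a| + |b|) ^ (2 - p) ≤ 2 * S ^ (2 - p) := by
      calc (|a| + |b|) ^ (2 - p) ≤ (2 * S) ^ (2 - p) :=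
            Real.rpow_le_rpow hAB.le h2S (by linarith)
        _ = 2 ^ (2 - p) * S ^ (2 - p) := Real.mul_rpow (by norm_num) hS.le
        _ ≤ 2 * S ^ (2 - p) := by
            have h2le : (2:ℝ) ^ (2 - p) ≤ 2 := by
              calc (2:ℝ) ^ (2 - p) ≤ (2:ℝ) ^ (1:ℝ) :=
                    Real.rpow_le_rpow_of_exponent_le (by norm_num) (by linarith)
                _ = 2 := Real.rpow_one 2
            exact mul_le_mul_of_nonneg_right h2le (Real.rpow_nonneg hS.le _)
    have hSpow : (0:ℝ) < S ^ (2 - p) := Real.rpow_pos_of_pos hS _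
    have hABpow : (0:ℝ) < (|a| + |b|) ^ (2 - p) := Real.rpow_pos_of_pos hAB _
    have hstep : p * (p - 1) / 16 * b ^ 2 / S ^ (2 - p)
        ≤ p * (p - 1) / 8 * b ^ 2 * (|a| + |b|) ^ (p - 2) := by
      have hexp : (|a| + |b|) ^ (p - 2) = ((|a| + |b|) ^ (2 - p))⁻¹ := by
        rw [show p - 2 = -(2 - p) by ring, Real.rpow_neg hAB.le]
      rw [hexp, div_le_iff₀ hSpow]  -- goal: c16*b^2 ≤ c8*b^2*inv * S^(2-p)
      have hcb : (0:ℝ) ≤ p * (p - 1) / 16 * b ^ 2 :=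
        mul_nonneg (by nlinarith) (sq_nonneg b)
      have hkey : p * (p - 1) / 16 * b ^ 2 * (|a| + |b|) ^ (2 - p)
          ≤ p * (p - 1) / 8 * b ^ 2 * S ^ (2 - p) := by
        calc p * (p - 1) / 16 * b ^ 2 * (|a| + |b|) ^ (2 - p)
            ≤ p * (p - 1) / 16 * b ^ 2 * (2 * S ^ (2 - p)) :=
              mul_le_mul_of_nonneg_left hpow hcb
          _ = p * (p - 1) / 8 * b ^ 2 * S ^ (2 - p) := by ring
      calc p * (p - 1) / 16 * b ^ 2
          = p * (p - 1) / 16 * b ^ 2 * (|a| + |b|) ^ (2 - p) * ((|a| + |b|) ^ (2 - p))⁻¹ := by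
            field_simp
        _ ≤ p * (p - 1) / 8 * b ^ 2 * S ^ (2 - p) * ((|a| + |b|) ^ (2 - p))⁻¹ := by
            exact mul_le_mul_of_nonneg_right hkey (by positivity)
        _ = p * (p - 1) / 8 * b ^ 2 * ((|a| + |b|) ^ (2 - p))⁻¹ * S ^ (2 - p) := by ring
    exact hstep.trans hG
end
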